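/- arXiv:2601.21121 — 5 statements merged into one kernel-verified Lean document; each statement's English description precedes it below -/
import Mathlib

section
/- For every m ∈ {1,…,ρ₀}, f^m_{d'_m}(t) = Σ_{J ⊆ E, |J| = n − d'_m} ( (Π_{ℓ=1}^{r(J)} gcd(m, e_{ℓ,J}) / Π_{ℓ=1}^{r(E)} gcd(m, e_{ℓ,E})) · t^{r(E) − r(J)} − 1 ) as polynomials in ℚ[t]. -/
open scoped BigOperators

namespace ArrCode

variable {k n : ℕ}

/-- The integer matrix `G` with entries reduced modulo `q`. -/
def Gmod (G : Matrix (Fin k) (Fin n) ℤ) (q : ℕ) : Matrix (Fin k) (Fin n) (ZMod q) :=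
  G.map (Int.cast : ℤ → ZMod q)

/-- The code `C_G(q)` over `ℤ/qℤ` generated by the rows of `G`. -/
def code (G : Matrix (Fin k) (Fin n) ℤ) (q : ℕ) : Set (Fin n → ZMod q) :=
  Set.range fun u : Fin k → ZMod q => Matrix.vecMul u (Gmod G q)

/-- `H_J(q) = { u ∈ (ℤ/qℤ)^k : u · g^j = 0 for all j ∈ J }`. -/
def HJ (G : Matrix (Fin k) (Fin n) ℤ) (J : Finset (Fin n)) (q : ℕ) :
    Set (Fin k → ZMod q) :=
  {u | ∀ j ∈ J, Matrix.vecMul u (Gmod G q) j = 0}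

/-- The rank `r(J)` over `ℚ` of the column submatrix `G_J`. -/
noncomputable def rk (G : Matrix (Fin k) (Fin n) ℤ) (J : Finset (Fin n)) : ℕ :=
  Matrix.rank (Matrix.of fun (i : Fin k) (j : J) => (G i j.1 : ℚ))

/-- The gcd of all `j × j` minors of the column submatrix `G_J`
(determinants of submatrices with repeated rows or columns vanish,
so this agrees with the usual minor gcd). -/
def minorGcd (G : Matrix (Fin k) (Fin n) ℤ) (J : Finset (Fin n)) (j : ℕ) : ℕ :=
  Finset.gcd Finset.univ fun p : (Fin j → Fin k) × (Fin j → J) =>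
    ((G.submatrix p.1 fun l => (p.2 l : Fin n)).det).natAbs

/-- The `ℓ`-th elementary divisor (invariant factor) `e_{ℓ,J}` of `G_J`,
characterized by `e_{1,J} ⋯ e_{j,J} =` gcd of all `j × j` minors of `G_J`. -/
def elemDiv (G : Matrix (Fin k) (Fin n) ℤ) (J : Finset (Fin n)) (ℓ : ℕ) : ℕ :=
  minorGcd G J ℓ / minorGcd G J (ℓ - 1)

/-- The lcm period `ρ₀ = lcm { e_{r(J),J} : ∅ ≠ J ⊆ E }`. -/
noncomputable def lcmPeriod (G : Matrix (Fin k) (Fin n) ℤ) : ℕ :=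
  Finset.lcm ((Finset.univ : Finset (Fin n)).powerset.filter fun J => J ≠ ∅)
    fun J => elemDiv G J (rk G J)

/-- The minimum weight `d_q` of `C_G(q)` (equal to `+∞` when the code is trivial). -/
noncomputable def minWt (G : Matrix (Fin k) (Fin n) ℤ) (q : ℕ) : ℕ∞ :=
  ⨅ (c : Fin n → ZMod q) (_ : c ∈ code G q) (_ : c ≠ 0), (hammingNorm c : ℕ∞)

/-- `A_{G,i}(q)`: the number of codewords of `C_G(q)` of Hamming weight `i`. -/
noncomputable def A (G : Matrix (Fin k) (Fin n) ℤ) (q i : ℕ) : ℕ :=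
  {c ∈ code G q | hammingNorm c = i}.ncard

/-- The characteristic quasi-polynomial value: the number of `u ∈ (ℤ/qℤ)^k`
with every coordinate of `uG` nonzero. -/
noncomputable def chiQuasi (G : Matrix (Fin k) (Fin n) ℤ) (q : ℕ) : ℕ :=
  {u : Fin k → ZMod q | ∀ j, Matrix.vecMul u (Gmod G q) j ≠ 0}.ncard

/-- `Π_{ℓ=1}^{r(J)} gcd(m, e_{ℓ,J})`. -/
noncomputable def gcdProd (G : Matrix (Fin k) (Fin n) ℤ) (m : ℕ) (J : Finset (Fin n)) : ℕ :=
  ∏ ℓ ∈ Finset.Icc 1 (rk G J), Nat.gcd m (elemDiv G J ℓ)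

/-- The constituent polynomial `f_i^m(t) ∈ ℚ[t]`. -/
noncomputable def fPoly (G : Matrix (Fin k) (Fin n) ℤ) (m i : ℕ) : Polynomial ℚ :=
  ∑ J ∈ (Finset.univ : Finset (Fin n)).powerset.filter (fun J => J.card = n - i),
    ∑ K ∈ (Finset.univ : Finset (Fin n)).powerset.filter (fun K => J ⊆ K),
      Polynomial.C ((-1 : ℚ) ^ (K.card - J.card) *
          (gcdProd G m K : ℚ) / (gcdProd G m Finset.univ : ℚ)) *
        Polynomial.X ^ (rk G Finset.univ - rk G K)

/-- `d'_m`: the least positive `i` such that `f_i^m` is not the zero polynomial. -/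
noncomputable def dPrime (G : Matrix (Fin k) (Fin n) ℤ) (m : ℕ) : ℕ :=
  sInf {i : ℕ | 0 < i ∧ fPoly G m i ≠ 0}

end ArrCode

namespace ArrCode

variable {k n : ℕ}

private lemma gcdProd_pos (G : Matrix (Fin k) (Fin n) ℤ) {m : ℕ} (hm : 1 ≤ m)
    (J : Finset (Fin n)) : 0 < gcdProd G m J :=
  Finset.prod_pos fun _ _ => Nat.gcd_pos_of_pos_left _ hm

private lemma rk_empty (G : Matrix (Fin k) (Fin n) ℤ) : rk G (∅ : Finset (Fin n)) = 0 :=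
  Nat.le_zero.mp ((Matrix.rank_le_card_width _).trans_eq (by simp))

private lemma gcdProd_empty (G : Matrix (Fin k) (Fin n) ℤ) (m : ℕ) :
    gcdProd G m (∅ : Finset (Fin n)) = 1 := by
  rw [gcdProd, rk_empty]; simp

private lemma rk_pos (G : Matrix (Fin k) (Fin n) ℤ)
    (hG : ∀ j : Fin n, ∃ i : Fin k, G i j ≠ 0)
    {K : Finset (Fin n)} (hK : K.Nonempty) : 0 < rk G K := by
  classical
  obtain ⟨j, hj⟩ := hK
  obtain ⟨i, hi⟩ := hG j
  rw [rk, Matrix.rank]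
  refine Module.finrank_pos_iff_exists_ne_zero.mpr ?_
  refine ⟨⟨_, LinearMap.mem_range_self _ (Pi.single (⟨j, hj⟩ : K) (1 : ℚ))⟩, ?_⟩
  intro h
  rw [Submodule.mk_eq_zero] at h
  have h2 := congrFun h i
  simp only [Matrix.mulVecLin_apply, Matrix.mulVec_single, mul_one, Matrix.of_apply,
    Pi.zero_apply, Int.cast_eq_zero] at h2
  exact hi (by simpa using h2)

/-- The basic polynomial `p_K`. -/
private noncomputable def pp (G : Matrix (Fin k) (Fin n) ℤ) (m : ℕ) (K : Finset (Fin n)) :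
    Polynomial ℚ :=
  Polynomial.C ((gcdProd G m K : ℚ) / (gcdProd G m Finset.univ : ℚ)) *
    Polynomial.X ^ (rk G Finset.univ - rk G K)

/-- The Möbius transform `g_J`. -/
private noncomputable def gg (G : Matrix (Fin k) (Fin n) ℤ) (m : ℕ) (J : Finset (Fin n)) :
    Polynomial ℚ :=
  ∑ K ∈ Finset.univ.filter (fun K => J ⊆ K), (-1 : ℚ) ^ (K.card - J.card) • pp G m K

private lemma fPoly_eq (G : Matrix (Fin k) (Fin n) ℤ) (m i : ℕ) :
    fPoly G m i
      = ∑ J ∈ Finset.univ.filter (fun J : Finset (Fin n) => J.card = n - i), gg G m J := by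
  unfold fPoly gg pp
  rw [Finset.powerset_univ]
  refine Finset.sum_congr rfl fun J _ => ?_
  refine Finset.sum_congr rfl fun K _ => ?_
  rw [mul_div_assoc, Polynomial.C_mul, mul_assoc, ← Polynomial.smul_eq_C_mul]

private lemma alt_sum (J L : Finset (Fin n)) (hJL : J ⊆ L) :
    ∑ K ∈ Finset.univ.filter (fun K : Finset (Fin n) => J ⊆ K ∧ K ⊆ L),
        (-1 : ℚ) ^ (L.card - K.card)
      = if L = J then 1 else 0 := by
  classical
  have himg : Finset.univ.filter (fun K : Finset (Fin n) => J ⊆ K ∧ K ⊆ L)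
      = (L \ J).powerset.image (fun T => J ∪ T) := by
    ext K
    simp only [Finset.mem_filter, Finset.mem_univ, true_and, Finset.mem_image,
      Finset.mem_powerset]
    constructor
    · rintro ⟨h1, h2⟩
      exact ⟨K \ J, Finset.sdiff_subset_sdiff h2 le_rfl, Finset.union_sdiff_of_subset h1⟩
    · rintro ⟨T, hT, rfl⟩
      exact ⟨Finset.subset_union_left, Finset.union_subset hJL (hT.trans Finset.sdiff_subset)⟩
  rw [himg, Finset.sum_image (by
    intro T₁ h₁ T₂ h₂ hEq
    rw [Finset.mem_coe, Finset.mem_powerset] at h₁ h₂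
    have d₁ : Disjoint J T₁ := (Finset.disjoint_sdiff.mono_right h₁ : _)
    have d₂ : Disjoint J T₂ := (Finset.disjoint_sdiff.mono_right h₂ : _)
    have := congrArg (fun S => S \ J) hEq
    simpa [Finset.union_sdiff_cancel_left d₁, Finset.union_sdiff_cancel_left d₂] using this)]
  have hterm : ∀ T ∈ (L \ J).powerset,
      (-1 : ℚ) ^ (L.card - (J ∪ T).card) = (-1 : ℚ) ^ (L \ J).card * (-1 : ℚ) ^ T.card := by
    intro T hT
    rw [Finset.mem_powerset] at hT
    have dT : Disjoint J T := (Finset.disjoint_sdiff.mono_right hT : _)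
    have hcard : (J ∪ T).card = J.card + T.card := Finset.card_union_of_disjoint dT
    have hTle : T.card ≤ (L \ J).card := Finset.card_le_card hT
    have hsd : (L \ J).card = L.card - J.card := Finset.card_sdiff_of_subset hJL
    have hJle : J.card ≤ L.card := Finset.card_le_card hJL
    have : L.card - (J ∪ T).card = (L \ J).card - T.card := by omega
    rw [this, pow_sub₀ _ (by norm_num : (-1 : ℚ) ≠ 0) hTle]
    congr 1
    rw [← inv_pow, inv_neg, inv_one]
  rw [Finset.sum_congr rfl hterm, ← Finset.mul_sum]
  have hz : ∑ T ∈ (L \ J).powerset, (-1 : ℚ) ^ T.card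
      = if L \ J = ∅ then 1 else 0 := by
    have := Finset.sum_powerset_neg_one_pow_card (x := L \ J)
    have h2 : ((∑ T ∈ (L \ J).powerset, (-1 : ℤ) ^ T.card : ℤ) : ℚ)
        = ∑ T ∈ (L \ J).powerset, (-1 : ℚ) ^ T.card := by push_cast; rfl
    rw [← h2, this]
    split <;> norm_num
  rw [hz]
  by_cases hLJ : L = J
  · subst hLJ
    simp
  · have : L \ J ≠ ∅ := by
      intro h
      exact hLJ (le_antisymm (Finset.sdiff_eq_empty_iff_subset.mp h) hJL)
    simp [this, hLJ]

private lemma pp_eq_sum_gg (G : Matrix (Fin k) (Fin n) ℤ) (m : ℕ) (J : Finset (Fin n)) :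
    pp G m J = ∑ K ∈ Finset.univ.filter (fun K => J ⊆ K), gg G m K := by
  classical
  simp only [gg]
  rw [Finset.sum_comm'
    (t' := Finset.univ.filter fun L : Finset (Fin n) => J ⊆ L)
    (s' := fun L => Finset.univ.filter fun K : Finset (Fin n) => J ⊆ K ∧ K ⊆ L)
    (by
      intro K L
      simp only [Finset.mem_filter, Finset.mem_univ, true_and]
      constructor
      · rintro ⟨h1, h2⟩; exact ⟨⟨h1, h2⟩, h1.trans h2⟩
      · rintro ⟨⟨h1, h2⟩, _⟩; exact ⟨h1, h2⟩)]
  have hinner : ∀ L ∈ Finset.univ.filter (fun L : Finset (Fin n) => J ⊆ L),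
      (∑ K ∈ Finset.univ.filter (fun K : Finset (Fin n) => J ⊆ K ∧ K ⊆ L),
        (-1 : ℚ) ^ (L.card - K.card) • pp G m L)
      = (if L = J then (1 : ℚ) else 0) • pp G m L := by
    intro L hL
    rw [← Finset.sum_smul, alt_sum J L (Finset.mem_filter.mp hL).2]
  have hite : ∀ L ∈ Finset.univ.filter (fun L : Finset (Fin n) => J ⊆ L),
      (if L = J then (1 : ℚ) else 0) • pp G m L
        = if L = J then pp G m L else 0 := by
    intro L _
    split <;> simp
  rw [Finset.sum_congr rfl hinner, Finset.sum_congr rfl hite, Finset.sum_ite_eq',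
    if_pos (Finset.mem_filter.mpr ⟨Finset.mem_univ _, Finset.Subset.refl J⟩)]

private lemma fPoly_zero (G : Matrix (Fin k) (Fin n) ℤ) {m : ℕ} (hm : 1 ≤ m) :
    fPoly G m 0 = 1 := by
  classical
  have huniv : Finset.univ.filter (fun J : Finset (Fin n) => J.card = n - 0)
      = {Finset.univ} := by
    ext J
    simp only [Finset.mem_filter, Finset.mem_univ, true_and, Finset.mem_singleton, Nat.sub_zero]
    constructor
    · intro h
      apply Finset.eq_univ_of_card
      simpa using h
    · rintro rfl; simp
  rw [fPoly_eq, huniv, Finset.sum_singleton, gg]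
  have h2 : Finset.univ.filter (fun K : Finset (Fin n) => Finset.univ ⊆ K)
      = {Finset.univ} := by
    ext K
    simp [Finset.univ_subset_iff, eq_comm]
  rw [h2, Finset.sum_singleton, Finset.card_univ, Nat.sub_self, pow_zero, one_smul, pp,
    Nat.sub_self, pow_zero, mul_one, div_self, map_one]
  exact_mod_cast (gcdProd_pos G hm _).ne'

private lemma fPoly_n_ne (G : Matrix (Fin k) (Fin n) ℤ)
    (hG : ∀ j : Fin n, ∃ i : Fin k, G i j ≠ 0) {m : ℕ} (hm : 1 ≤ m) (hn : 1 ≤ n) :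
    fPoly G m n ≠ 0 := by
  classical
  have hr : 0 < rk G (Finset.univ : Finset (Fin n)) :=
    rk_pos G hG ⟨⟨0, hn⟩, Finset.mem_univ _⟩
  have hcE : (0 : ℚ) < (gcdProd G m Finset.univ : ℚ) := by
    exact_mod_cast gcdProd_pos G hm _
  intro h
  have hemp : Finset.univ.filter (fun J : Finset (Fin n) => J.card = n - n)
      = {(∅ : Finset (Fin n))} := by
    ext J
    simp [Nat.sub_self, Finset.card_eq_zero]
  have hall : Finset.univ.filter (fun K : Finset (Fin n) => (∅ : Finset (Fin n)) ⊆ K)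
      = Finset.univ := by
    simp
  have hc := congrArg (fun p => Polynomial.coeff p (rk G Finset.univ)) h
  rw [fPoly_eq, hemp, Finset.sum_singleton, gg, hall] at hc
  simp only [Polynomial.coeff_zero, Polynomial.finset_sum_coeff] at hc
  rw [Finset.sum_eq_single_of_mem (∅ : Finset (Fin n)) (Finset.mem_univ _)
    (fun K _ hK => by
      have hKpos : 0 < rk G K := rk_pos G hG (Finset.nonempty_iff_ne_empty.mpr hK)
      rw [pp, Polynomial.coeff_smul, Polynomial.coeff_C_mul, Polynomial.coeff_X_pow,
        if_neg (by omega : ¬ rk G Finset.univ = rk G Finset.univ - rk G K)]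
      simp)] at hc
  rw [pp, rk_empty, Nat.sub_zero, Polynomial.coeff_smul, Polynomial.coeff_C_mul,
    Polynomial.coeff_X_pow, if_pos rfl, gcdProd_empty] at hc
  simp only [Finset.card_empty, Nat.sub_zero, pow_zero, mul_one, Nat.cast_one, smul_eq_mul,
    one_mul] at hc
  rw [div_eq_zero_iff] at hc
  rcases hc with hc | hc
  · exact one_ne_zero hc
  · exact hcE.ne' hc

end ArrCode



namespace ArrCode

theorem stmt9 (k n : ℕ) (hk : 1 ≤ k) (hn : 1 ≤ n) (G : Matrix (Fin k) (Fin n) ℤ)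
    (hG : ∀ j : Fin n, ∃ i : Fin k, G i j ≠ 0)
    (m : ℕ) (hm1 : 1 ≤ m) (hm2 : m ≤ lcmPeriod G) :
    fPoly G m (dPrime G m) =
      ∑ J ∈ (Finset.univ : Finset (Fin n)).powerset.filter
          (fun J => J.card = n - dPrime G m),
        (Polynomial.C ((gcdProd G m J : ℚ) / (gcdProd G m Finset.univ : ℚ)) *
            Polynomial.X ^ (rk G Finset.univ - rk G J) - 1) := by
  classical
  have hS : {i : ℕ | 0 < i ∧ fPoly G m i ≠ 0}.Nonempty :=
    ⟨n, Set.mem_setOf.mpr ⟨hn, fPoly_n_ne G hG hm1 hn⟩⟩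
  have hdd : dPrime G m = sInf {i : ℕ | 0 < i ∧ fPoly G m i ≠ 0} := rfl
  have hd : 0 < dPrime G m ∧ fPoly G m (dPrime G m) ≠ 0 := by
    rw [hdd]; exact Nat.sInf_mem hS
  have hdn : dPrime G m ≤ n := by
    rw [hdd]; exact Nat.sInf_le (Set.mem_setOf.mpr ⟨hn, fPoly_n_ne G hG hm1 hn⟩)
  have hd1 : 1 ≤ dPrime G m := hd.1
  set c' := n - dPrime G m with hc'
  have hzero : ∀ i, 0 < i → i < dPrime G m → fPoly G m i = 0 := by
    intro i h1 h2
    by_contra hne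
    rw [hdd] at h2
    exact absurd (Nat.sInf_le (Set.mem_setOf.mpr ⟨h1, hne⟩)) (not_le.mpr h2)
  have step1 : ∑ J ∈ Finset.univ.filter (fun J : Finset (Fin n) => J.card = c'), pp G m J
      = ∑ K : Finset (Fin n), (K.card.choose c') • gg G m K := by
    calc ∑ J ∈ Finset.univ.filter (fun J : Finset (Fin n) => J.card = c'), pp G m J
        = ∑ J ∈ Finset.univ.filter (fun J : Finset (Fin n) => J.card = c'),
            ∑ K ∈ Finset.univ.filter (fun K => J ⊆ K), gg G m K :=
          Finset.sum_congr rfl fun J _ => pp_eq_sum_gg G m J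
      _ = ∑ K ∈ Finset.univ,
            ∑ J ∈ Finset.univ.filter
              (fun J : Finset (Fin n) => J.card = c' ∧ J ⊆ K), gg G m K := by
          refine Finset.sum_comm' ?_
          intro J K
          simp only [Finset.mem_filter, Finset.mem_univ, true_and, and_true]
      _ = ∑ K : Finset (Fin n), (K.card.choose c') • gg G m K := by
          refine Finset.sum_congr rfl fun K _ => ?_
          rw [Finset.sum_const]
          congr 1
          rw [show Finset.univ.filter (fun J : Finset (Fin n) => J.card = c' ∧ J ⊆ K)
              = Finset.powersetCard c' K from by
            ext J
            simp only [Finset.mem_filter, Finset.mem_univ, true_and,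
              Finset.mem_powersetCard]
            tauto, Finset.card_powersetCard]
  have step2 : ∑ K : Finset (Fin n), (K.card.choose c') • gg G m K
      = ∑ j ∈ Finset.range (n+1),
          ∑ K ∈ Finset.univ.filter (fun K : Finset (Fin n) => K.card = j),
            (K.card.choose c') • gg G m K :=
    (Finset.sum_fiberwise_of_maps_to (fun K _ => Finset.mem_range.mpr
      (Nat.lt_succ_of_le ((Finset.card_le_univ K).trans_eq (by simp)))) _).symm
  have step3 : ∀ j ∈ Finset.range (n+1),
      (∑ K ∈ Finset.univ.filter (fun K : Finset (Fin n) => K.card = j),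
        (K.card.choose c') • gg G m K)
      = (j.choose c') • fPoly G m (n - j) := by
    intro j hj
    rw [Finset.mem_range, Nat.lt_succ_iff] at hj
    rw [fPoly_eq, Finset.smul_sum, Nat.sub_sub_self hj]
    exact Finset.sum_congr rfl fun K hK => by rw [(Finset.mem_filter.mp hK).2]
  have step4 : ∑ j ∈ Finset.range (n+1), (j.choose c') • fPoly G m (n - j)
      = fPoly G m (dPrime G m) + (n.choose c') • (1 : Polynomial ℚ) := by
    have hsplit : ∀ j ∈ Finset.range (n+1), (j.choose c') • fPoly G m (n - j)
        = (if j = c' then fPoly G m (dPrime G m) else 0)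
          + (if j = n then (n.choose c') • (1 : Polynomial ℚ) else 0) := by
      intro j hj
      rw [Finset.mem_range, Nat.lt_succ_iff] at hj
      rcases eq_or_ne j c' with rfl | h1
      · rw [if_pos rfl, if_neg (by omega), add_zero, Nat.choose_self, one_smul,
          show n - c' = dPrime G m by omega]
      rcases eq_or_ne j n with rfl | h2
      · rw [if_neg h1, if_pos rfl, zero_add, Nat.sub_self, fPoly_zero G hm1]
      rw [if_neg h1, if_neg h2, add_zero]
      rcases lt_or_gt_of_ne h1 with h3 | h3
      · rw [Nat.choose_eq_zero_of_lt h3, zero_smul]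
      · rw [hzero (n - j) (by omega) (by omega), smul_zero]
    rw [Finset.sum_congr rfl hsplit, Finset.sum_add_distrib,
      Finset.sum_ite_eq' _ c' _, Finset.sum_ite_eq' _ n _,
      if_pos (Finset.mem_range.mpr (by omega)), if_pos (Finset.mem_range.mpr (by omega))]
  have key : ∑ J ∈ Finset.univ.filter (fun J : Finset (Fin n) => J.card = c'), pp G m J
      = fPoly G m (dPrime G m) + (n.choose c') • (1 : Polynomial ℚ) := by
    rw [step1, step2, Finset.sum_congr rfl step3, step4]
  have hcard : (Finset.univ.filter (fun J : Finset (Fin n) => J.card = c')).card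
      = n.choose c' := by
    rw [show Finset.univ.filter (fun J : Finset (Fin n) => J.card = c')
        = Finset.powersetCard c' Finset.univ from by
      ext J
      simp [Finset.mem_powersetCard], Finset.card_powersetCard, Finset.card_univ,
      Fintype.card_fin]
  rw [Finset.powerset_univ]
  calc fPoly G m (dPrime G m)
      = (fPoly G m (dPrime G m) + (n.choose c') • (1 : Polynomial ℚ))
          - (n.choose c') • (1 : Polynomial ℚ) := by rw [add_sub_cancel_right]
    _ = ∑ J ∈ Finset.univ.filter (fun J : Finset (Fin n) => J.card = c'),
          (pp G m J - 1) := by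
        rw [Finset.sum_sub_distrib, Finset.sum_const, key, hcard]
    _ = _ := by
        refine Finset.sum_congr rfl fun J _ => ?_
        simp only [pp]


end ArrCode
end

section
/- For all subsets J ⊆ J' ⊆ E and every q ∈ ℤ_{>0}, the product Π_{ℓ=1}^{r(J)} gcd(q, e_{ℓ,J'}) divides the product Π_{ℓ=1}^{r(J)} gcd(q, e_{ℓ,J}); in particular the quotient (Π_{ℓ=1}^{r(J)} gcd(q, e_{ℓ,J})) / (Π_{ℓ=1}^{r(J)} gcd(q, e_{ℓ,J'})) is a positive integer. -/
open scoped BigOperators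

namespace ArrCode



section Aux

open Matrix

variable {α β γ : Type*} [Fintype α] [Fintype β] [Fintype γ]

lemma natCast_dvd_int {c : ℕ} {z : ℤ} : (c : ℤ) ∣ z ↔ c ∣ z.natAbs := by
  rw [← Int.natAbs_dvd_natAbs, Int.natAbs_natCast]

/-- gcd of all `s × s` minors (with arbitrary, possibly non-injective, index selections). -/
def mGcd (A : Matrix α β ℤ) (s : ℕ) : ℕ :=
  Finset.gcd Finset.univ fun p : (Fin s → α) × (Fin s → β) =>
    ((A.submatrix p.1 p.2).det).natAbs

lemma mGcd_dvd (A : Matrix α β ℤ) {s : ℕ} (R : Fin s → α) (C : Fin s → β) :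
    (mGcd A s : ℤ) ∣ (A.submatrix R C).det :=
  natCast_dvd_int.mpr (Finset.gcd_dvd (Finset.mem_univ (R, C)))

lemma dvd_mGcd {c : ℕ} (A : Matrix α β ℤ) {s : ℕ}
    (h : ∀ (R : Fin s → α) (C : Fin s → β), (c : ℤ) ∣ (A.submatrix R C).det) :
    c ∣ mGcd A s :=
  Finset.dvd_gcd fun p _ => natCast_dvd_int.mp (h p.1 p.2)

lemma mGcd_zero (A : Matrix α β ℤ) : mGcd A 0 = 1 := by
  have h : mGcd A 0 ∣ 1 := by
    have := Finset.gcd_dvd (f := fun p : (Fin 0 → α) × (Fin 0 → β) =>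
      ((A.submatrix p.1 p.2).det).natAbs)
      (Finset.mem_univ (finZeroElim, finZeroElim))
    simpa [mGcd, Matrix.det_fin_zero] using this
  exact Nat.dvd_one.mp h

/-- Core lemma: if every column of `B` lies in the span of the columns of `A`,
then `mGcd A s` divides every `s`-minor of `B`. -/
lemma mGcd_dvd_det_of_cols (A : Matrix α β ℤ) (B : Matrix α γ ℤ)
    (h : ∀ j, (fun i => B i j) ∈ Submodule.span ℤ (Set.range fun t => fun i => A i t))
    {s : ℕ} (R : Fin s → α) (C : Fin s → γ) :
    (mGcd A s : ℤ) ∣ (B.submatrix R C).det := by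
  classical
  choose c hc using fun j => (Submodule.mem_span_range_iff_exists_fun ℤ).mp (h j)
  have hM : ((B.submatrix R C)ᵀ : Matrix (Fin s) (Fin s) ℤ)
      = fun l => ∑ t : β, c (C l) t • fun i : Fin s => A (R i) t := by
    funext l i
    have h1 := congrFun (hc (C l)) (R i)
    simp only [Finset.sum_apply, Pi.smul_apply, smul_eq_mul] at h1
    show B (R i) (C l) = (∑ t : β, c (C l) t • fun i : Fin s => A (R i) t) i
    simp only [Finset.sum_apply, Pi.smul_apply, smul_eq_mul]
    exact h1.symm
  have key : ((B.submatrix R C)ᵀ).det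
      = ∑ r : Fin s → β, (∏ l, c (C l) (r l)) * (A.submatrix R r).det := by
    calc ((B.submatrix R C)ᵀ).det
        = (Matrix.detRowAlternating (R := ℤ) (n := Fin s)).toMultilinearMap
            (fun l => ∑ t : β, c (C l) t • fun i : Fin s => A (R i) t) := by
          rw [← hM]; rfl
      _ = ∑ r : Fin s → β, (Matrix.detRowAlternating (R := ℤ) (n := Fin s)).toMultilinearMap
            (fun l => c (C l) (r l) • fun i : Fin s => A (R i) (r l)) :=
          MultilinearMap.map_sum _ (fun l t => c (C l) t • fun i : Fin s => A (R i) t)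
      _ = ∑ r : Fin s → β, (∏ l, c (C l) (r l)) * (A.submatrix R r).det := by
          refine Finset.sum_congr rfl fun r _ => ?_
          rw [MultilinearMap.map_smul_univ, smul_eq_mul]
          congr 1
          show ((A.submatrix R r)ᵀ).det = (A.submatrix R r).det
          exact Matrix.det_transpose _
  rw [← Matrix.det_transpose, key]
  exact Finset.dvd_sum fun r _ => Dvd.dvd.mul_left (mGcd_dvd A R r) _

lemma mGcd_dvd_mGcd_of_cols (A : Matrix α β ℤ) (B : Matrix α γ ℤ)
    (h : ∀ j, (fun i => B i j) ∈ Submodule.span ℤ (Set.range fun t => fun i => A i t))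
    (s : ℕ) : mGcd A s ∣ mGcd B s :=
  dvd_mGcd B fun R C => mGcd_dvd_det_of_cols A B h R C

lemma mGcd_transpose_dvd (A : Matrix α β ℤ) (s : ℕ) : mGcd Aᵀ s ∣ mGcd A s := by
  refine Finset.dvd_gcd fun p _ => ?_
  have h : ((A.submatrix p.1 p.2).det).natAbs = ((Aᵀ.submatrix p.2 p.1).det).natAbs := by
    rw [← Matrix.det_transpose (A.submatrix p.1 p.2), Matrix.transpose_submatrix]
  rw [h]
  exact Finset.gcd_dvd (Finset.mem_univ (p.2, p.1))

lemma mGcd_transpose (A : Matrix α β ℤ) (s : ℕ) : mGcd Aᵀ s = mGcd A s :=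
  Nat.dvd_antisymm (mGcd_transpose_dvd A s) (by simpa using mGcd_transpose_dvd Aᵀ s)

lemma mGcd_dvd_mGcd_of_rows (A : Matrix α β ℤ) (B : Matrix γ β ℤ)
    (h : ∀ i, (fun j => B i j) ∈ Submodule.span ℤ (Set.range fun t => fun j => A t j))
    (s : ℕ) : mGcd A s ∣ mGcd B s := by
  rw [← mGcd_transpose A, ← mGcd_transpose B]
  exact mGcd_dvd_mGcd_of_cols Aᵀ Bᵀ h s

lemma rows_mul_mem_span (M : Matrix γ α ℤ) (A : Matrix α β ℤ) (i : γ) :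
    (fun j => (M * A) i j) ∈ Submodule.span ℤ (Set.range fun t => fun j => A t j) := by
  have hrow : (fun j => (M * A) i j) = ∑ t : α, M i t • fun j => A t j := by
    funext j
    simp [Matrix.mul_apply, Finset.sum_apply]
  rw [hrow]
  exact Submodule.sum_mem _ fun t _ =>
    Submodule.smul_mem _ _ (Submodule.subset_span ⟨t, rfl⟩)

lemma map_mem_span_range {M M' : Type*} [AddCommGroup M] [AddCommGroup M']
    [Module ℤ M] [Module ℤ M'] (F : M →ₗ[ℤ] M') {v : β → M} {x : M}
    (hx : x ∈ Submodule.span ℤ (Set.range v)) :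
    F x ∈ Submodule.span ℤ (Set.range fun t => F (v t)) := by
  obtain ⟨c, hc⟩ := (Submodule.mem_span_range_iff_exists_fun ℤ).mp hx
  refine (Submodule.mem_span_range_iff_exists_fun ℤ).mpr ⟨c, ?_⟩
  rw [← hc, map_sum]
  simp


end Aux

section Aux2
set_option linter.unusedSectionVars false

/-- gcd of all products of `s` distinct entries of `b`. -/
def Ds {m : ℕ} (b : Fin m → ℕ) (s : ℕ) : ℕ :=
  Finset.gcd (Finset.powersetCard s Finset.univ) fun S => ∏ i ∈ S, b i

lemma finset_gcd_mul_right {δ : Type*} (s : Finset δ) (f : δ → ℕ) (c : ℕ) :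
    s.gcd (fun x => f x * c) = s.gcd f * c := by
  simpa using Finset.gcd_mul_right (s := s) (f := f) (a := c)

lemma finset_gcd_mul_left {δ : Type*} (s : Finset δ) (f : δ → ℕ) (c : ℕ) :
    s.gcd (fun x => c * f x) = c * s.gcd f := by
  simpa [mul_comm] using finset_gcd_mul_right s f c

lemma dvd_gcd_mul_gcd {δ ε : Type*} {s : Finset δ} {t : Finset ε} {f : δ → ℕ} {g : ε → ℕ}
    {c : ℕ} (h : ∀ x ∈ s, ∀ y ∈ t, c ∣ f x * g y) : c ∣ s.gcd f * t.gcd g := by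
  rw [← finset_gcd_mul_right]
  refine Finset.dvd_gcd fun x hx => ?_
  rw [← finset_gcd_mul_left]
  exact Finset.dvd_gcd fun y hy => h x hx y hy

lemma Ds_zero {m : ℕ} (b : Fin m → ℕ) : Ds b 0 = 1 := by
  simp [Ds, Finset.powersetCard_zero]

lemma Ds_chain {m : ℕ} (b : Fin m → ℕ) (s : ℕ) : Ds b s ∣ Ds b (s + 1) := by
  refine Finset.dvd_gcd fun S hS => ?_
  rw [Finset.mem_powersetCard] at hS
  obtain ⟨T, hTS, hT⟩ := Finset.exists_subset_card_eq (n := s) (s := S) (by omega)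
  exact dvd_trans (Finset.gcd_dvd (Finset.mem_powersetCard.mpr ⟨Finset.subset_univ _, hT⟩))
    (Finset.prod_dvd_prod_of_subset _ _ _ hTS)

lemma Ds_ne_zero {m : ℕ} {b : Fin m → ℕ} (hb : ∀ i, b i ≠ 0) {s : ℕ} (hs : s ≤ m) :
    Ds b s ≠ 0 := by
  obtain ⟨S, _, hS⟩ := Finset.exists_subset_card_eq
    (n := s) (s := (Finset.univ : Finset (Fin m))) (by simpa using hs)
  intro h0
  rw [Ds, Finset.gcd_eq_zero_iff] at h0
  have := h0 S (Finset.mem_powersetCard.mpr ⟨Finset.subset_univ _, hS⟩)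
  exact (Finset.prod_ne_zero_iff.mpr fun i _ => hb i) this

lemma Ds_convex {m : ℕ} (b : Fin m → ℕ) (ℓ : ℕ) (hℓ : 1 ≤ ℓ) :
    Ds b ℓ * Ds b ℓ ∣ Ds b (ℓ - 1) * Ds b (ℓ + 1) := by
  classical
  refine dvd_gcd_mul_gcd fun Bs hB As hA => ?_
  rw [Finset.mem_powersetCard] at hB hA
  have hcard : Bs.card < As.card := by omega
  have hns : ¬ As ⊆ Bs := fun hsub => absurd (Finset.card_le_card hsub) (by omega)
  obtain ⟨x, hxA, hxB⟩ := Finset.not_subset.mp hns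
  have h1 : (∏ i ∈ Bs, b i) * ∏ i ∈ As, b i
      = (∏ i ∈ insert x Bs, b i) * ∏ i ∈ As.erase x, b i := by
    rw [Finset.prod_insert hxB, ← Finset.mul_prod_erase As b hxA]
    ring
  rw [h1]
  have hc1 : (insert x Bs).card = ℓ := by
    rw [Finset.card_insert_of_notMem hxB]; omega
  have hc2 : (As.erase x).card = ℓ := by
    rw [Finset.card_erase_of_mem hxA]; omega
  exact mul_dvd_mul
    (Finset.gcd_dvd (Finset.mem_powersetCard.mpr ⟨Finset.subset_univ _, hc1⟩))
    (Finset.gcd_dvd (Finset.mem_powersetCard.mpr ⟨Finset.subset_univ _, hc2⟩))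

/-- Telescoping sum of increments. -/
lemma sum_incr {w : ℕ → ℕ} (hw0 : w 0 = 0) {r : ℕ}
    (hmono : ∀ s, s < r → w s ≤ w (s + 1)) :
    ∀ s, s ≤ r → ∑ ℓ ∈ Finset.Icc 1 s, (w ℓ - w (ℓ - 1)) = w s := by
  intro s
  induction s with
  | zero => intro _; simpa using hw0.symm
  | succ t ih =>
    intro hs
    rw [Finset.sum_Icc_succ_top (by omega)]
    rw [ih (by omega)]
    have h1 := hmono t (by omega)
    have h2 : t + 1 - 1 = t := by omega
    rw [h2]
    omega

/-- Upper bound: `∑_{ℓ=1}^{j} min a (v ℓ) ≤ (∑_{ℓ=1}^{s} v ℓ) + (j - s) * a` for `s ≤ j`. -/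
lemma sum_min_le (a : ℕ) (v : ℕ → ℕ) {s j : ℕ} (hs : s ≤ j) :
    ∑ ℓ ∈ Finset.Icc 1 j, min a (v ℓ)
      ≤ (∑ ℓ ∈ Finset.Icc 1 s, v ℓ) + (j - s) * a := by
  have hIcc : ∀ x : ℕ, Finset.Icc 1 x = Finset.Ioc 0 x := fun x => Finset.Icc_add_one_left_eq_Ioc 0 x
  have hsplit : ∑ ℓ ∈ Finset.Icc 1 j, min a (v ℓ)
      = (∑ ℓ ∈ Finset.Icc 1 s, min a (v ℓ)) + ∑ ℓ ∈ Finset.Ioc s j, min a (v ℓ) := by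
    rw [hIcc j, hIcc s]
    exact (Finset.sum_Ioc_consecutive _ (by omega) hs).symm
  rw [hsplit]
  refine Nat.add_le_add ?_ ?_
  · exact Finset.sum_le_sum fun ℓ _ => min_le_right _ _
  · calc ∑ ℓ ∈ Finset.Ioc s j, min a (v ℓ) ≤ ∑ _ℓ ∈ Finset.Ioc s j, a :=
        Finset.sum_le_sum fun ℓ _ => min_le_left _ _
      _ = (j - s) * a := by rw [Finset.sum_const, Nat.card_Ioc, smul_eq_mul]

/-- Lower bound via monotone increments. -/
lemma le_sum_min (a : ℕ) (v : ℕ → ℕ) {r : ℕ}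
    (hv : ∀ ℓ ℓ', 1 ≤ ℓ → ℓ ≤ ℓ' → ℓ' ≤ r → v ℓ ≤ v ℓ') :
    ∀ j, j ≤ r → ∃ s, s ≤ j ∧
      (∑ ℓ ∈ Finset.Icc 1 s, v ℓ) + (j - s) * a ≤ ∑ ℓ ∈ Finset.Icc 1 j, min a (v ℓ) := by
  intro j
  induction j with
  | zero => intro _; exact ⟨0, le_refl 0, by simp⟩
  | succ t ih =>
    intro hj
    by_cases hcase : a ≤ v (t + 1)
    · obtain ⟨s, hs, hle⟩ := ih (by omega)
      refine ⟨s, by omega, ?_⟩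
      rw [Finset.sum_Icc_succ_top (by omega : 1 ≤ t + 1)]
      have hmin : min a (v (t + 1)) = a := min_eq_left hcase
      have hexp : (t + 1 - s) * a = (t - s) * a + a := by
        have : t + 1 - s = (t - s) + 1 := by omega
        rw [this, Nat.succ_mul]
      omega
    · refine ⟨t + 1, le_refl _, ?_⟩
      have heq : ∀ ℓ ∈ Finset.Icc 1 (t + 1), min a (v ℓ) = v ℓ := by
        intro ℓ hℓ
        rw [Finset.mem_Icc] at hℓ
        have : v ℓ ≤ v (t + 1) := hv ℓ (t + 1) hℓ.1 hℓ.2 hj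
        exact min_eq_right (by omega)
      rw [Finset.sum_congr rfl heq]
      simp



end Aux2

section Aux3
set_option linter.unusedSectionVars false
set_option maxHeartbeats 1000000
open Matrix

variable {α β : Type*} [Fintype α] [Fintype β] [DecidableEq α]


lemma mGcd_diagLike_eq_Ds {m : ℕ} (f : Fin m ↪ α) (a : Fin m → ℤ) (s : ℕ) :
    mGcd (Matrix.of fun t l => if t = f l then a l else 0) s
      = Ds (fun l => (a l).natAbs) s := by
  classical
  set W : Matrix α (Fin m) ℤ := Matrix.of fun t l => if t = f l then a l else 0 with hW
  set b : Fin m → ℕ := fun l => (a l).natAbs with hb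
  have hWapp : ∀ t l, W t l = if t = f l then a l else 0 := fun t l => rfl
  refine Nat.dvd_antisymm ?_ ?_
  · -- mGcd W s ∣ Ds b s
    refine Finset.dvd_gcd fun S hS => ?_
    rw [Finset.mem_powersetCard] at hS
    have e := S.orderIsoOfFin hS.2
    set C : Fin s → Fin m := fun j => (e j : Fin m) with hC
    have hCinj : Function.Injective C := fun x y hxy => by
      have := Subtype.coe_injective hxy
      exact e.injective this
    set R : Fin s → α := fun j => f (C j) with hR
    have hdiag : W.submatrix R C = Matrix.diagonal (fun j => a (C j)) := by
      ext i j
      rw [Matrix.submatrix_apply, hWapp, Matrix.diagonal_apply]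
      by_cases hij : i = j
      · subst hij; simp [hR]
      · have hne : f (C i) ≠ f (C j) := fun hh => hij (hCinj (f.injective hh))
        rw [if_neg (by simpa [hR] using hne), if_neg hij]
    have hdvd : mGcd W s ∣ ((W.submatrix R C).det).natAbs :=
      Finset.gcd_dvd (Finset.mem_univ (R, C))
    rw [hdiag, Matrix.det_diagonal] at hdvd
    have habs : ((∏ j, a (C j)).natAbs) = ∏ i ∈ S, b i := by
      have h1 : ((∏ j, a (C j)).natAbs : ℤ) = ((∏ i ∈ S, b i : ℕ) : ℤ) := by
        rw [← Int.abs_eq_natAbs, Finset.abs_prod]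
        rw [Nat.cast_prod]
        have h2 : ∀ j, |a (C j)| = ((b (C j) : ℕ) : ℤ) := fun j => Int.abs_eq_natAbs _
        rw [Finset.prod_congr rfl fun j _ => h2 j]
        have h3 : ∏ i ∈ S, ((b i : ℕ) : ℤ) = ∏ j : Fin s, ((b (C j) : ℕ) : ℤ) := by
          rw [← Finset.prod_coe_sort S (fun i => ((b i : ℕ) : ℤ))]
          exact (Equiv.prod_comp e.toEquiv (fun x => ((b (x : Fin m) : ℕ) : ℤ))).symm
        rw [h3]
      exact_mod_cast h1
    rwa [habs] at hdvd
  · -- Ds b s ∣ mGcd W s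
    refine dvd_mGcd W fun R C => ?_
    by_cases hC : Function.Injective C
    · have hfact : W.submatrix R C
          = Matrix.of fun i j => (a (C j)) * (if R i = f (C j) then 1 else 0) := by
        ext i j
        rw [Matrix.submatrix_apply, hWapp]
        by_cases h : R i = f (C j) <;> simp [h]
      have hrow := Matrix.det_mul_row (fun j => a (C j))
        (Matrix.of fun i j => if R i = f (C j) then (1:ℤ) else 0)
      simp only [Matrix.of_apply] at hrow
      rw [hfact, hrow]
      have h1 : (Ds b s : ℤ) ∣ ∏ j, (a (C j)) := by
        have himg : (Finset.univ.image C) ∈ Finset.powersetCard s (Finset.univ : Finset (Fin m)) := by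
          rw [Finset.mem_powersetCard]
          refine ⟨Finset.subset_univ _, ?_⟩
          rw [Finset.card_image_of_injective _ hC, Finset.card_univ, Fintype.card_fin]
        have h2 : Ds b s ∣ ∏ i ∈ Finset.univ.image C, b i := Finset.gcd_dvd himg
        have h3 : ∏ i ∈ Finset.univ.image C, b i = ∏ j, b (C j) :=
          Finset.prod_image (fun x _ y _ h => hC h)
        rw [h3] at h2
        have h4 : (Ds b s : ℤ) ∣ (∏ j, (b (C j)) : ℕ) := Int.natCast_dvd_natCast.mpr h2
        rw [Nat.cast_prod] at h4
        refine dvd_trans h4 (Finset.prod_dvd_prod_of_dvd _ _ fun j _ => ?_)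
        exact Int.natAbs_dvd.mpr dvd_rfl
      exact Dvd.dvd.mul_right h1 _
    · obtain ⟨x, y, hxy, hne⟩ := Function.not_injective_iff.mp hC
      have hcols : ∀ i, (W.submatrix R C) i x = (W.submatrix R C) i y := by
        intro i; rw [Matrix.submatrix_apply, Matrix.submatrix_apply, hxy]
      rw [Matrix.det_zero_of_column_eq hne hcols]
      exact dvd_zero _

lemma rank_le_of_cols_in_span {γ : Type*} [Fintype γ] {m : ℕ}
    (B : Matrix α γ ℤ) (v : Fin m → (α → ℤ))
    (h : ∀ j, (fun i => B i j) ∈ Submodule.span ℤ (Set.range v)) :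
    Matrix.rank (B.map (Int.cast : ℤ → ℚ)) ≤ m := by
  classical
  set Q : (α → ℤ) →ₗ[ℤ] (α → ℚ) := LinearMap.compLeft (Algebra.linearMap ℤ ℚ) α with hQ
  have hrank : Matrix.rank (B.map (Int.cast : ℤ → ℚ))
      = Module.finrank ℚ (Submodule.span ℚ (Set.range (B.map (Int.cast : ℤ → ℚ))ᵀ)) := by
    rw [Matrix.rank, Matrix.range_mulVecLin]
    rfl
  have hcols : ∀ j, ((B.map (Int.cast : ℤ → ℚ))ᵀ) j
      ∈ Submodule.span ℚ (Set.range fun l => Q (v l)) := by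
    intro j
    have h2 := map_mem_span_range Q (h j)
    have h3 : ((B.map (Int.cast : ℤ → ℚ))ᵀ) j = Q (fun i => B i j) := by
      funext i; rfl
    rw [h3]
    exact Submodule.span_subset_span ℤ ℚ _ h2
  have hle : Submodule.span ℚ (Set.range (B.map (Int.cast : ℤ → ℚ))ᵀ)
      ≤ Submodule.span ℚ (Set.range fun l => Q (v l)) := by
    rw [Submodule.span_le]
    rintro x ⟨j, rfl⟩
    exact hcols j
  have hfin : Module.finrank ℚ (Submodule.span ℚ (Set.range fun l => Q (v l))) ≤ m := by
    refine le_trans (finrank_span_le_card _) ?_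
    rw [Set.toFinset_range]
    exact le_trans (Finset.card_image_le) (by simp)
  rw [hrank]
  exact le_trans (Submodule.finrank_mono hle) hfin

lemma exists_Ds (A : Matrix α β ℤ) :
    ∃ (m : ℕ) (b : Fin m → ℕ), (∀ i, b i ≠ 0) ∧ (∀ s, mGcd A s = Ds b s) ∧
      ∀ (γ : Type) (_ : Fintype γ) (B : Matrix α γ ℤ),
        (∀ j, (fun i => B i j) ∈ Submodule.span ℤ (Set.range fun t => fun i => A i t)) →
          Matrix.rank (B.map (Int.cast : ℤ → ℚ)) ≤ m := by
  classical
  set N : Submodule ℤ (α → ℤ) := Submodule.span ℤ (Set.range fun t => fun i => A i t) with hN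
  obtain ⟨m, bM, bN, f, a, hsnf⟩ := N.smithNormalForm (Pi.basisFun ℤ α)
  have ha : ∀ l, a l ≠ 0 := by
    intro l hl
    have h0 : (bN l : α → ℤ) = 0 := by rw [hsnf l, hl, zero_smul]
    exact bN.ne_zero l (by exact_mod_cast Subtype.coe_injective (h0.trans rfl))
  -- the coordinate map w.r.t. bM
  set L : (α → ℤ) →ₗ[ℤ] (α → ℤ) :=
    (Finsupp.lcoeFun : (α →₀ ℤ) →ₗ[ℤ] α → ℤ).comp (bM.repr : (α → ℤ) ≃ₗ[ℤ] (α →₀ ℤ)).toLinearMap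
    with hLdef
  have hL : ∀ x t, L x t = bM.repr x t := fun _ _ => rfl
  set Afl : Matrix α β ℤ := Matrix.of fun t j => L (fun i => A i j) t with hAfl
  set W : Matrix α (Fin m) ℤ := Matrix.of fun t l => L ((bN l : α → ℤ)) t with hW
  -- step 1 : mGcd A = mGcd Afl
  have hVA : (Matrix.of fun i t => (bM t) i) * Afl = A := by
    ext i j
    rw [Matrix.mul_apply]
    have h2 := congrFun (bM.sum_repr (fun i' => A i' j)) i
    simp only [Finset.sum_apply, Pi.smul_apply, smul_eq_mul] at h2
    calc ∑ t, (Matrix.of fun i t => (bM t) i) i t * Afl t j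
        = ∑ t, bM.repr (fun i' => A i' j) t * bM t i := by
          refine Finset.sum_congr rfl fun t _ => ?_
          simp only [Matrix.of_apply, hAfl, hL]
          ring
      _ = A i j := h2
  have hTA : (Matrix.of fun t i => L (Pi.single i 1) t) * A = Afl := by
    ext t j
    rw [Matrix.mul_apply]
    have hcol : (fun i => A i j) = ∑ i : α, (A i j) • Pi.single i (1 : ℤ) :=
      calc (fun i => A i j) = ∑ i : α, Pi.single i (A i j) :=
            (Finset.univ_sum_single (fun i => A i j)).symm
        _ = ∑ i : α, (A i j) • Pi.single i (1 : ℤ) := Finset.sum_congr rfl fun i _ => by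
              rw [← Pi.single_smul, smul_eq_mul, mul_one]
    have h3 : L (fun i => A i j) = ∑ i : α, (A i j) • L (Pi.single i (1:ℤ)) := by
      rw [hcol, map_sum]
      exact Finset.sum_congr rfl fun i _ => L.map_smul _ _
    have h4 : Afl t j = ∑ i : α, (A i j) * L (Pi.single i (1:ℤ)) t := by
      have h5 : Afl t j = L (fun i => A i j) t := rfl
      rw [h5, h3, Finset.sum_apply]
      exact Finset.sum_congr rfl fun i _ => by
        rw [Pi.smul_apply, smul_eq_mul]
    rw [h4]
    exact Finset.sum_congr rfl fun i _ => by simp only [Matrix.of_apply]; ring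
  have step1 : ∀ s, mGcd A s = mGcd Afl s := by
    intro s
    refine Nat.dvd_antisymm ?_ ?_
    · refine mGcd_dvd_mGcd_of_rows A Afl (fun i => ?_) s
      rw [← hTA]
      exact rows_mul_mem_span _ A i
    · refine mGcd_dvd_mGcd_of_rows Afl A (fun i => ?_) s
      rw [← hVA]
      exact rows_mul_mem_span _ Afl i
  -- explicit form of W
  have hWapp : ∀ t l, W t l = if t = f l then a l else 0 := by
    intro t l
    rw [hW]
    simp only [Matrix.of_apply, hL]
    rw [show ((bN l : α → ℤ)) = a l • bM (f l) from hsnf l]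
    rw [_root_.map_smul, Finsupp.smul_apply, Module.Basis.repr_self, smul_eq_mul]
    rw [Finsupp.single_apply]
    by_cases h : t = f l
    · simp [h]
    · rw [if_neg h, if_neg (fun hh => h hh.symm), mul_zero]
  -- step 2 : mGcd Afl = mGcd W
  have hNN : Submodule.span ℤ (Set.range fun l => ((bN l : α → ℤ))) = N := by
    calc Submodule.span ℤ (Set.range fun l => ((bN l : α → ℤ)))
        = Submodule.map N.subtype (Submodule.span ℤ (Set.range bN)) := by
          rw [Submodule.map_span]
          congr 1
          exact Set.range_comp _ _
      _ = Submodule.map N.subtype ⊤ := by rw [bN.span_eq]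
      _ = N := by rw [Submodule.map_top, Submodule.range_subtype]
  have step2 : ∀ s, mGcd Afl s = mGcd W s := by
    intro s
    refine Nat.dvd_antisymm ?_ ?_
    · refine mGcd_dvd_mGcd_of_cols Afl W (fun l => ?_) s
      have h1 : (bN l : α → ℤ) ∈ Submodule.span ℤ (Set.range fun t => fun i => A i t) := by
        rw [← hN]; exact (bN l).2
      exact map_mem_span_range L h1
    · refine mGcd_dvd_mGcd_of_cols W Afl (fun j => ?_) s
      have h1 : (fun i => A i j) ∈ Submodule.span ℤ (Set.range fun l => ((bN l : α → ℤ))) := by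
        rw [hNN, hN]
        exact Submodule.subset_span ⟨j, rfl⟩
      exact map_mem_span_range L h1
  -- step 3 : mGcd W = Ds (natAbs ∘ a)
  set b : Fin m → ℕ := fun l => (a l).natAbs with hb
  have hbne : ∀ l, b l ≠ 0 := fun l => by
    simp only [hb, ne_eq, Int.natAbs_eq_zero]; exact ha l
  have hWeq : W = Matrix.of fun t l => if t = f l then a l else 0 := by
    ext t l; rw [hWapp]; rfl
  have step3 : ∀ s, mGcd W s = Ds b s := by
    intro s
    rw [hWeq]
    exact mGcd_diagLike_eq_Ds f a s
  -- step 4 : rank bound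
  have step4 : ∀ (γ : Type) (_ : Fintype γ) (B : Matrix α γ ℤ),
      (∀ j, (fun i => B i j) ∈ Submodule.span ℤ (Set.range fun t => fun i => A i t)) →
        Matrix.rank (B.map (Int.cast : ℤ → ℚ)) ≤ m := by
    intro γ instγ B hB
    refine rank_le_of_cols_in_span B (fun l => ((bN l : α → ℤ))) fun j => ?_
    rw [hNN, hN]
    exact hB j
  exact ⟨m, b, hbne, fun s => (step1 s).trans ((step2 s).trans (step3 s)), step4⟩

end Aux3

section Final

open Matrix

variable {k n : ℕ}

/-- The integer column submatrix `G_J`. -/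
def colSub (G : Matrix (Fin k) (Fin n) ℤ) (J : Finset (Fin n)) :
    Matrix (Fin k) {x // x ∈ J} ℤ :=
  Matrix.of fun i j => G i (j : Fin n)

lemma mono_of_step {v : ℕ → ℕ} {r : ℕ} (hstep : ∀ ℓ, 1 ≤ ℓ → ℓ + 1 ≤ r → v ℓ ≤ v (ℓ + 1)) :
    ∀ ℓ ℓ', 1 ≤ ℓ → ℓ ≤ ℓ' → ℓ' ≤ r → v ℓ ≤ v ℓ' := by
  intro ℓ ℓ' h1 h2 h3
  induction ℓ' with
  | zero => omega
  | succ t ih =>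
    by_cases h : ℓ = t + 1
    · subst h; exact le_refl _
    · exact le_trans (ih (by omega) (by omega)) (hstep t (by omega) (by omega))

end Final

theorem stmt12 (k n : ℕ) (hk : 1 ≤ k) (hn : 1 ≤ n) (G : Matrix (Fin k) (Fin n) ℤ)
    (hG : ∀ j : Fin n, ∃ i : Fin k, G i j ≠ 0)
    (J J' : Finset (Fin n)) (hJJ' : J ⊆ J') (q : ℕ) (hq : 0 < q) :
    (∏ ℓ ∈ Finset.Icc 1 (rk G J), Nat.gcd q (elemDiv G J' ℓ)) ∣
      (∏ ℓ ∈ Finset.Icc 1 (rk G J), Nat.gcd q (elemDiv G J ℓ)) := by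
  classical
  set AJ := colSub G J with hAJ
  set AJ' := colSub G J' with hAJ'
  have hmin : ∀ s, minorGcd G J s = mGcd AJ s := fun s => rfl
  have hmin' : ∀ s, minorGcd G J' s = mGcd AJ' s := fun s => rfl
  obtain ⟨m, b, hbne, hDs, hrank⟩ := exists_Ds AJ
  obtain ⟨m', b', hbne', hDs', hrank'⟩ := exists_Ds AJ'
  set r := rk G J with hr
  -- columns of AJ lie in the span of the columns of AJ'
  have hincl : ∀ j : {x // x ∈ J}, (fun i => AJ i j) ∈
      Submodule.span ℤ (Set.range fun t => fun i => AJ' i t) := by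
    intro j
    exact Submodule.subset_span ⟨⟨j.1, hJJ' j.2⟩, rfl⟩
  have hself : ∀ j : {x // x ∈ J}, (fun i => AJ i j) ∈
      Submodule.span ℤ (Set.range fun t => fun i => AJ i t) := by
    intro j
    exact Submodule.subset_span ⟨j, rfl⟩
  have hrk_eq : r = Matrix.rank (AJ.map (Int.cast : ℤ → ℚ)) := rfl
  have hrm : r ≤ m := by
    rw [hrk_eq]
    exact hrank _ inferInstance AJ hself
  have hrm' : r ≤ m' := by
    rw [hrk_eq]
    exact hrank' _ inferInstance AJ hincl
  -- basic facts on the minor gcds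
  have hDJ : ∀ s, minorGcd G J s = Ds b s := fun s => (hmin s).trans (hDs s)
  have hDJ' : ∀ s, minorGcd G J' s = Ds b' s := fun s => (hmin' s).trans (hDs' s)
  have hdvdJJ' : ∀ s, minorGcd G J' s ∣ minorGcd G J s := by
    intro s
    rw [hmin, hmin']
    exact mGcd_dvd_mGcd_of_cols AJ' AJ hincl s
  have hpos : ∀ s, s ≤ r → minorGcd G J s ≠ 0 := fun s hs => by
    rw [hDJ]; exact Ds_ne_zero hbne (le_trans hs hrm)
  have hpos' : ∀ s, s ≤ r → minorGcd G J' s ≠ 0 := fun s hs => by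
    rw [hDJ']; exact Ds_ne_zero hbne' (le_trans hs hrm')
  have hchain : ∀ s, minorGcd G J s ∣ minorGcd G J (s + 1) := fun s => by
    rw [hDJ, hDJ]; exact Ds_chain b s
  have hchain' : ∀ s, minorGcd G J' s ∣ minorGcd G J' (s + 1) := fun s => by
    rw [hDJ', hDJ']; exact Ds_chain b' s
  have hconv : ∀ ℓ, 1 ≤ ℓ → minorGcd G J ℓ * minorGcd G J ℓ ∣
      minorGcd G J (ℓ - 1) * minorGcd G J (ℓ + 1) := fun ℓ hℓ => by
    rw [hDJ, hDJ, hDJ]; exact Ds_convex b ℓ hℓ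
  have hchain1 : ∀ ℓ, 1 ≤ ℓ → minorGcd G J (ℓ - 1) ∣ minorGcd G J ℓ := fun ℓ hℓ => by
    have := hchain (ℓ - 1)
    rwa [show ℓ - 1 + 1 = ℓ by omega] at this
  have hchain1' : ∀ ℓ, 1 ≤ ℓ → minorGcd G J' (ℓ - 1) ∣ minorGcd G J' ℓ := fun ℓ hℓ => by
    have := hchain' (ℓ - 1)
    rwa [show ℓ - 1 + 1 = ℓ by omega] at this
  -- elementary divisors are nonzero in the relevant range
  have hene : ∀ ℓ ∈ Finset.Icc 1 r, elemDiv G J ℓ ≠ 0 := by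
    intro ℓ hℓ
    rw [Finset.mem_Icc] at hℓ
    intro h0
    have hd := hchain1 ℓ hℓ.1
    have := Nat.div_mul_cancel hd
    rw [elemDiv] at h0
    rw [h0, zero_mul] at this
    exact hpos ℓ hℓ.2 this.symm
  have hene' : ∀ ℓ ∈ Finset.Icc 1 r, elemDiv G J' ℓ ≠ 0 := by
    intro ℓ hℓ
    rw [Finset.mem_Icc] at hℓ
    intro h0
    have hd := hchain1' ℓ hℓ.1
    have := Nat.div_mul_cancel hd
    rw [elemDiv] at h0
    rw [h0, zero_mul] at this
    exact hpos' ℓ hℓ.2 this.symm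
  have hqne : q ≠ 0 := by omega
  -- nonvanishing of both products
  have hPne : (∏ ℓ ∈ Finset.Icc 1 r, Nat.gcd q (elemDiv G J ℓ)) ≠ 0 :=
    Finset.prod_ne_zero_iff.mpr fun ℓ hℓ => Nat.gcd_ne_zero_left hqne
  have hP'ne : (∏ ℓ ∈ Finset.Icc 1 r, Nat.gcd q (elemDiv G J' ℓ)) ≠ 0 :=
    Finset.prod_ne_zero_iff.mpr fun ℓ hℓ => Nat.gcd_ne_zero_left hqne
  rw [← Nat.factorization_le_iff_dvd hP'ne hPne, Finsupp.le_def]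
  intro p
  rw [Nat.factorization_prod (fun ℓ hℓ => Nat.gcd_ne_zero_left hqne),
    Nat.factorization_prod (fun ℓ hℓ => Nat.gcd_ne_zero_left hqne),
    Finset.sum_apply', Finset.sum_apply']
  set a : ℕ := q.factorization p with haa
  set w : ℕ → ℕ := fun s => (minorGcd G J s).factorization p with hw
  set w' : ℕ → ℕ := fun s => (minorGcd G J' s).factorization p with hw'
  set v : ℕ → ℕ := fun ℓ => w ℓ - w (ℓ - 1) with hv
  set v' : ℕ → ℕ := fun ℓ => w' ℓ - w' (ℓ - 1) with hv'
  have hgcdJ : ∀ ℓ ∈ Finset.Icc 1 r,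
      ((Nat.gcd q (elemDiv G J ℓ)).factorization) p = min a (v ℓ) := by
    intro ℓ hℓ
    rw [Nat.factorization_gcd hqne (hene ℓ hℓ), Finsupp.inf_apply]
    congr 1
    rw [Finset.mem_Icc] at hℓ
    rw [elemDiv, Nat.factorization_div (hchain1 ℓ hℓ.1), Finsupp.tsub_apply]
  have hgcdJ' : ∀ ℓ ∈ Finset.Icc 1 r,
      ((Nat.gcd q (elemDiv G J' ℓ)).factorization) p = min a (v' ℓ) := by
    intro ℓ hℓ
    rw [Nat.factorization_gcd hqne (hene' ℓ hℓ), Finsupp.inf_apply]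
    congr 1
    rw [Finset.mem_Icc] at hℓ
    rw [elemDiv, Nat.factorization_div (hchain1' ℓ hℓ.1), Finsupp.tsub_apply]
  rw [Finset.sum_congr rfl hgcdJ, Finset.sum_congr rfl hgcdJ']
  -- facts about the valuation sequences
  have hfacmono : ∀ {x y : ℕ}, x ≠ 0 → y ≠ 0 → x ∣ y →
      x.factorization p ≤ y.factorization p := by
    intro x y hx hy hxy
    exact Finsupp.le_def.mp ((Nat.factorization_le_iff_dvd hx hy).mpr hxy) p
  have hw0 : w 0 = 0 := by
    have : minorGcd G J 0 = 1 := by rw [hDJ 0]; exact Ds_zero b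
    rw [hw]; simp [this]
  have hw0' : w' 0 = 0 := by
    have : minorGcd G J' 0 = 1 := by rw [hDJ' 0]; exact Ds_zero b'
    rw [hw']; simp [this]
  have hwmono : ∀ s, s < r → w s ≤ w (s + 1) := fun s hs =>
    hfacmono (hpos s (by omega)) (hpos (s + 1) (by omega)) (hchain s)
  have hwmono' : ∀ s, s < r → w' s ≤ w' (s + 1) := fun s hs =>
    hfacmono (hpos' s (by omega)) (hpos' (s + 1) (by omega)) (hchain' s)
  have hle : ∀ s, s ≤ r → w' s ≤ w s := fun s hs =>
    hfacmono (hpos' s hs) (hpos s hs) (hdvdJJ' s)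
  -- monotonicity of v on [1, r]
  have hstep : ∀ ℓ, 1 ≤ ℓ → ℓ + 1 ≤ r → v ℓ ≤ v (ℓ + 1) := by
    intro ℓ h1 h2
    have hcv := hconv ℓ h1
    have hne1 : minorGcd G J ℓ * minorGcd G J ℓ ≠ 0 :=
      Nat.mul_ne_zero (hpos ℓ (by omega)) (hpos ℓ (by omega))
    have hne2 : minorGcd G J (ℓ - 1) * minorGcd G J (ℓ + 1) ≠ 0 :=
      Nat.mul_ne_zero (hpos (ℓ - 1) (by omega)) (hpos (ℓ + 1) (by omega))
    have hfle := hfacmono hne1 hne2 hcv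
    rw [Nat.factorization_mul (hpos ℓ (by omega)) (hpos ℓ (by omega)),
      Nat.factorization_mul (hpos (ℓ - 1) (by omega)) (hpos (ℓ + 1) (by omega)),
      Finsupp.add_apply, Finsupp.add_apply] at hfle
    have hm1 : w (ℓ - 1) ≤ w ℓ := by
      have := hwmono (ℓ - 1) (by omega)
      rwa [show ℓ - 1 + 1 = ℓ by omega] at this
    have hm2 : w ℓ ≤ w (ℓ + 1) := hwmono ℓ (by omega)
    have e1 : v ℓ = w ℓ - w (ℓ - 1) := rfl
    have e2 : v (ℓ + 1) = w (ℓ + 1) - w ℓ := by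
      rw [hv]; simp
    rw [e1, e2]
    have hfle' : w ℓ + w ℓ ≤ w (ℓ - 1) + w (ℓ + 1) := hfle
    omega
  have hvmono := mono_of_step hstep
  obtain ⟨s0, hs0, hK2⟩ := le_sum_min a v hvmono r (le_refl r)
  have hK1 := sum_min_le a v' hs0
  have htel : ∑ ℓ ∈ Finset.Icc 1 s0, v ℓ = w s0 := by
    refine sum_incr hw0 hwmono s0 hs0
  have htel' : ∑ ℓ ∈ Finset.Icc 1 s0, v' ℓ = w' s0 := by
    refine sum_incr hw0' hwmono' s0 hs0
  rw [htel] at hK2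
  rw [htel'] at hK1
  calc ∑ ℓ ∈ Finset.Icc 1 r, min a (v' ℓ) ≤ w' s0 + (r - s0) * a := hK1
    _ ≤ w s0 + (r - s0) * a := by
        have := hle s0 hs0
        omega
    _ ≤ ∑ ℓ ∈ Finset.Icc 1 r, min a (v ℓ) := hK2



end ArrCode
end

section
/- Let k ≥ 2 and q ≥ 1 be integers. (a) The code N_k(q) contains no codeword of odd Hamming weight less than k. (b) The code Z_k(q) contains no codeword of odd Hamming weight at most k. (c) If k ≥ 3, then neither N_k(q) nor Z_k(q) contains a codeword of Hamming weight 2. -/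
open scoped BigOperators

namespace ArrCode

/-- The matrix `Ñ_k = (I_k ∣ J_k − I_k)`. -/
def Ntilde (k : ℕ) : Matrix (Fin k) (Fin (2 * k)) ℤ :=
  Matrix.of fun i j =>
    if (j : ℕ) < k then (if (i : ℕ) = (j : ℕ) then 1 else 0)
    else (if (i : ℕ) = (j : ℕ) - k then 0 else 1)

/-- The matrix `Ž_k = (I_k ∣ J_k − I_k ∣ 1_k)`. -/
def Ztilde (k : ℕ) : Matrix (Fin k) (Fin (2 * k + 1)) ℤ :=
  Matrix.of fun i j =>
    if (j : ℕ) < k then (if (i : ℕ) = (j : ℕ) then 1 else 0)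
    else if (j : ℕ) < 2 * k then (if (i : ℕ) = (j : ℕ) - k then 0 else 1)
    else 1


section Aux

variable {k q n : ℕ}

private lemma vecMul_eq' (u : Fin k → ZMod q) (G : Matrix (Fin k) (Fin n) ℤ) (j : Fin n) :
    Matrix.vecMul u (Gmod G q) j = ∑ i, u i * ((G i j : ℤ) : ZMod q) := by
  simp [Matrix.vecMul, dotProduct, Gmod]

private lemma cN_apply (u : Fin k → ZMod q) (j : Fin (2*k)) :
    Matrix.vecMul u (Gmod (Ntilde k) q) j =
      if h : (j:ℕ) < k then u ⟨j, h⟩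
      else (∑ i, u i) - u ⟨(j:ℕ) - k, by have := j.isLt; omega⟩ := by
  have hj := j.isLt
  rw [vecMul_eq']
  split_ifs with h
  · rw [Finset.sum_eq_single (⟨(j:ℕ), h⟩ : Fin k)]
    · simp [Ntilde, h]
    · intro i _ hi
      have hne : (i:ℕ) ≠ (j:ℕ) := by simpa [Fin.ext_iff] using hi
      simp [Ntilde, h, hne]
    · simp
  · have hk' : (j:ℕ) - k < k := by omega
    have key : ∀ i : Fin k, u i * ((Ntilde k i j : ℤ) : ZMod q)
        = u i - (if i = (⟨(j:ℕ) - k, hk'⟩ : Fin k) then u i else 0) := by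
      intro i
      by_cases hi : i = (⟨(j:ℕ) - k, hk'⟩ : Fin k)
      · subst hi; simp [Ntilde, h]
      · have hne : (i:ℕ) ≠ (j:ℕ) - k := by simpa [Fin.ext_iff] using hi
        simp [Ntilde, h, hne, hi]
    rw [Finset.sum_congr rfl (fun i _ => key i), Finset.sum_sub_distrib]
    simp

private lemma cZ_apply (u : Fin k → ZMod q) (j : Fin (2*k+1)) :
    Matrix.vecMul u (Gmod (Ztilde k) q) j =
      if h : (j:ℕ) < k then u ⟨j, h⟩
      else if h2 : (j:ℕ) < 2*k then (∑ i, u i) - u ⟨(j:ℕ) - k, by omega⟩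
      else ∑ i, u i := by
  have hj := j.isLt
  rw [vecMul_eq']
  split_ifs with h h2
  · rw [Finset.sum_eq_single (⟨(j:ℕ), h⟩ : Fin k)]
    · simp [Ztilde, h]
    · intro i _ hi
      have hne : (i:ℕ) ≠ (j:ℕ) := by simpa [Fin.ext_iff] using hi
      simp [Ztilde, h, hne]
    · simp
  · have hk' : (j:ℕ) - k < k := by omega
    have key : ∀ i : Fin k, u i * ((Ztilde k i j : ℤ) : ZMod q)
        = u i - (if i = (⟨(j:ℕ) - k, hk'⟩ : Fin k) then u i else 0) := by
      intro i
      by_cases hi : i = (⟨(j:ℕ) - k, hk'⟩ : Fin k)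
      · subst hi; simp [Ztilde, h, h2]
      · have hne : (i:ℕ) ≠ (j:ℕ) - k := by simpa [Fin.ext_iff] using hi
        simp [Ztilde, h, h2, hne, hi]
    rw [Finset.sum_congr rfl (fun i _ => key i), Finset.sum_sub_distrib]
    simp
  · simp [Ztilde, h, h2]

private lemma wtN (u : Fin k → ZMod q) :
    hammingNorm (Matrix.vecMul u (Gmod (Ntilde k) q)) =
      (Finset.univ.filter fun i : Fin k => u i ≠ 0).card +
      (Finset.univ.filter fun i : Fin k => u i ≠ ∑ l, u l).card := by
  set c := Matrix.vecMul u (Gmod (Ntilde k) q) with hc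
  rw [hammingNorm, Finset.card_filter,
    ← Equiv.sum_comp (finSumFinEquiv.trans (finCongr (two_mul k).symm))
      (fun j => if c j ≠ 0 then (1:ℕ) else 0)]
  rw [Fintype.sum_sum_type]
  congr 1
  · rw [Finset.card_filter]
    refine Finset.sum_congr rfl fun i _ => ?_
    have hv : (((finSumFinEquiv.trans (finCongr (two_mul k).symm)) (Sum.inl i) : Fin (2*k)) : ℕ) = (i : ℕ) := by
      simp
    have : c ((finSumFinEquiv.trans (finCongr (two_mul k).symm)) (Sum.inl i)) = u i := by
      rw [hc, cN_apply]
      rw [dif_pos (by rw [hv]; exact i.isLt)]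
      exact congrArg u (Fin.ext (by have h := hv; simp only [Fin.val_mk]; omega))
    rw [this]
  · rw [Finset.card_filter]
    refine Finset.sum_congr rfl fun i _ => ?_
    have hv : (((finSumFinEquiv.trans (finCongr (two_mul k).symm)) (Sum.inr i) : Fin (2*k)) : ℕ) = k + (i : ℕ) := by
      simp; omega
    have : c ((finSumFinEquiv.trans (finCongr (two_mul k).symm)) (Sum.inr i)) = (∑ l, u l) - u i := by
      rw [hc, cN_apply]
      rw [dif_neg (by omega)]
      exact congrArg (fun x => (∑ l, u l) - u x)
        (Fin.ext (by have h := hv; simp only [Fin.val_mk]; omega))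
    rw [this]
    congr 1
    simp only [ne_eq, sub_eq_zero, eq_comm]

private lemma wtZ (u : Fin k → ZMod q) :
    hammingNorm (Matrix.vecMul u (Gmod (Ztilde k) q)) =
      (Finset.univ.filter fun i : Fin k => u i ≠ 0).card +
      (Finset.univ.filter fun i : Fin k => u i ≠ ∑ l, u l).card +
      (if (∑ l, u l) ≠ 0 then 1 else 0) := by
  set c := Matrix.vecMul u (Gmod (Ztilde k) q) with hc
  rw [hammingNorm, Finset.card_filter, Fin.sum_univ_castSucc]
  have hlast : c (Fin.last (2*k)) = ∑ l, u l := by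
    rw [hc, cZ_apply]
    rw [dif_neg (by simp [Fin.last]; omega), dif_neg (by simp [Fin.last])]
  rw [hlast]
  congr 1
  rw [← Equiv.sum_comp (finSumFinEquiv.trans (finCongr (two_mul k).symm))
      (fun j : Fin (2*k) => if c j.castSucc ≠ 0 then (1:ℕ) else 0)]
  rw [Fintype.sum_sum_type]
  congr 1
  · rw [Finset.card_filter]
    refine Finset.sum_congr rfl fun i _ => ?_
    have hv : ((((finSumFinEquiv.trans (finCongr (two_mul k).symm)) (Sum.inl i) : Fin (2*k)).castSucc : Fin (2*k+1)) : ℕ) = (i : ℕ) := by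
      simp
    have : c (((finSumFinEquiv.trans (finCongr (two_mul k).symm)) (Sum.inl i)).castSucc) = u i := by
      rw [hc, cZ_apply]
      rw [dif_pos (by rw [hv]; exact i.isLt)]
      exact congrArg u (Fin.ext (by have h := hv; simp only [Fin.val_mk]; omega))
    rw [this]
  · rw [Finset.card_filter]
    refine Finset.sum_congr rfl fun i _ => ?_
    have hv : ((((finSumFinEquiv.trans (finCongr (two_mul k).symm)) (Sum.inr i) : Fin (2*k)).castSucc : Fin (2*k+1)) : ℕ) = k + (i : ℕ) := by
      simp; omega
    have : c (((finSumFinEquiv.trans (finCongr (two_mul k).symm)) (Sum.inr i)).castSucc) = (∑ l, u l) - u i := by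
      rw [hc, cZ_apply]
      rw [dif_neg (by omega), dif_pos (by rw [hv]; have := i.isLt; omega)]
      exact congrArg (fun x => (∑ l, u l) - u x)
        (Fin.ext (by have h := hv; simp only [Fin.val_mk]; omega))
    rw [this]
    congr 1
    simp only [ne_eq, sub_eq_zero, eq_comm]

private lemma key_ge (u : Fin k → ZMod q) (hS : (∑ l, u l) ≠ 0) :
    k ≤ (Finset.univ.filter fun i : Fin k => u i ≠ 0).card +
      (Finset.univ.filter fun i : Fin k => u i ≠ ∑ l, u l).card := by
  have hsub : (Finset.univ.filter fun i : Fin k => u i = ∑ l, u l) ⊆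
      (Finset.univ.filter fun i : Fin k => u i ≠ 0) := by
    intro i hi
    simp only [Finset.mem_filter, Finset.mem_univ, true_and] at hi ⊢
    rw [hi]; exact hS
  have h1 := Finset.card_le_card hsub
  have h2 : (Finset.univ.filter fun i : Fin k => u i = ∑ l, u l).card +
      (Finset.univ.filter fun i : Fin k => ¬ (u i = ∑ l, u l)).card = k := by
    rw [Finset.card_filter_add_card_filter_not]
    simp
  have h3 : (Finset.univ.filter fun i : Fin k => u i = ∑ l, u l).card ≤ k :=
    le_trans (Finset.card_le_card (Finset.filter_subset _ _)) (by simp)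
  simp only [ne_eq] at h1 ⊢
  omega

private lemma key_even (u : Fin k → ZMod q) (hS : (∑ l, u l) = 0) :
    (Finset.univ.filter fun i : Fin k => u i ≠ ∑ l, u l) =
    (Finset.univ.filter fun i : Fin k => u i ≠ 0) := by
  rw [hS]

private lemma key_one (u : Fin k → ZMod q) (hS : (∑ l, u l) = 0) :
    (Finset.univ.filter fun i : Fin k => u i ≠ 0).card ≠ 1 := by
  intro h1
  obtain ⟨i0, hi0⟩ := Finset.card_eq_one.mp h1
  have hsum : (∑ l, u l) = u i0 := by
    rw [← Finset.sum_filter_ne_zero Finset.univ (f := u), hi0, Finset.sum_singleton]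
  have : i0 ∈ (Finset.univ.filter fun i : Fin k => u i ≠ 0) := by
    rw [hi0]; exact Finset.mem_singleton_self i0
  simp only [Finset.mem_filter, Finset.mem_univ, true_and] at this
  exact this (by rw [← hsum, hS])

end Aux

theorem stmt16 (k q : ℕ) (hk : 2 ≤ k) (hq : 1 ≤ q) :
    (∀ c ∈ code (Ntilde k) q, Odd (hammingNorm c) → k ≤ hammingNorm c) ∧
    (∀ c ∈ code (Ztilde k) q, Odd (hammingNorm c) → k < hammingNorm c) ∧
    (3 ≤ k →
      (∀ c ∈ code (Ntilde k) q, hammingNorm c ≠ 2) ∧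
      (∀ c ∈ code (Ztilde k) q, hammingNorm c ≠ 2)) := by
  refine ⟨?_, ?_, ?_⟩
  · intro c hcm hodd
    simp only [code, Set.mem_range] at hcm
    obtain ⟨u, rfl⟩ := hcm
    rw [wtN] at hodd ⊢
    by_cases hS : (∑ l, u l) = 0
    · rw [key_even u hS] at hodd
      rw [Nat.odd_iff] at hodd; omega
    · exact key_ge u hS
  · intro c hcm hodd
    simp only [code, Set.mem_range] at hcm
    obtain ⟨u, rfl⟩ := hcm
    rw [wtZ] at hodd ⊢
    by_cases hS : (∑ l, u l) = 0
    · rw [key_even u hS, if_neg (by simp [hS])] at hodd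
      rw [Nat.odd_iff] at hodd; omega
    · rw [if_pos hS]
      have := key_ge u hS
      omega
  · intro hk3
    constructor
    · intro c hcm h2
      simp only [code, Set.mem_range] at hcm
      obtain ⟨u, rfl⟩ := hcm
      rw [wtN] at h2
      by_cases hS : (∑ l, u l) = 0
      · rw [key_even u hS] at h2
        exact key_one u hS (by omega)
      · have := key_ge u hS; omega
    · intro c hcm h2
      simp only [code, Set.mem_range] at hcm
      obtain ⟨u, rfl⟩ := hcm
      rw [wtZ] at h2
      by_cases hS : (∑ l, u l) = 0
      · rw [key_even u hS, if_neg (by simp [hS])] at h2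
        exact key_one u hS (by omega)
      · rw [if_pos hS] at h2
        have := key_ge u hS; omega


end ArrCode
end

section
/- Let k ≥ 2 and q ≥ 2 be integers. The minimum weight (least Hamming weight of a nonzero codeword) of N_k(q) equals k if k < 4 and equals 4 if k ≥ 4; the minimum weight of Z_k(q) equals k+1 if k < 4 and equals 4 if k ≥ 4. -/
open scoped BigOperators

namespace ArrCode

/- ## auxiliary -/

lemma aux_sum_ite_ne {k q : ℕ} (u : Fin k → ZMod q) (j0 : Fin k) :
    ∑ i, (if i = j0 then (0 : ZMod q) else u i) = (∑ i, u i) - u j0 := by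
  have : ∀ i : Fin k, (if i = j0 then (0 : ZMod q) else u i)
      = u i - (if i = j0 then u i else 0) := by
    intro i; split_ifs <;> simp
  rw [Finset.sum_congr rfl fun i _ => this i, Finset.sum_sub_distrib,
    Finset.sum_ite_eq' Finset.univ j0 u]
  simp

lemma aux_sum_ite_eq {k q : ℕ} (u : Fin k → ZMod q) (j0 : Fin k) :
    ∑ i, u i * (((if (i:ℕ) = (j0:ℕ) then 1 else 0 : ℤ)) : ZMod q) = u j0 := by
  have key : ∀ i : Fin k,
      u i * (((if (i:ℕ) = (j0:ℕ) then 1 else 0 : ℤ)) : ZMod q)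
      = if i = j0 then u i else 0 := by
    intro i
    by_cases hi : i = j0
    · simp [hi]
    · have h2 : (i : ℕ) ≠ (j0 : ℕ) := fun hc => hi (Fin.ext hc)
      simp [h2, hi]
  rw [Finset.sum_congr rfl fun i _ => key i, Finset.sum_ite_eq' Finset.univ _ u]
  simp

lemma aux_sum_ite_ne' {k q : ℕ} (u : Fin k → ZMod q) (j0 : Fin k) :
    ∑ i, u i * (((if (i:ℕ) = (j0:ℕ) then 0 else 1 : ℤ)) : ZMod q)
      = (∑ i, u i) - u j0 := by
  have key : ∀ i : Fin k,
      u i * (((if (i:ℕ) = (j0:ℕ) then 0 else 1 : ℤ)) : ZMod q)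
      = if i = j0 then 0 else u i := by
    intro i
    by_cases hi : i = j0
    · have h2 : (i : ℕ) = (j0 : ℕ) := by rw [hi]
      simp [hi, h2]
    · have h2 : (i : ℕ) ≠ (j0 : ℕ) := fun hc => hi (Fin.ext hc)
      simp [h2, hi]
  rw [Finset.sum_congr rfl fun i _ => key i, aux_sum_ite_ne]

lemma N_vecMul {k q : ℕ} (u : Fin k → ZMod q) (j : Fin (2 * k)) :
    Matrix.vecMul u (Gmod (Ntilde k) q) j =
      if h : (j : ℕ) < k then u ⟨j, h⟩
      else (∑ i, u i) - u ⟨(j : ℕ) - k, by omega⟩ := by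
  have hj : (j : ℕ) < 2 * k := j.isLt
  simp only [Matrix.vecMul, dotProduct, Gmod, Ntilde, Matrix.map_apply,
    Matrix.of_apply]
  split_ifs with h
  · exact aux_sum_ite_eq u ⟨(j:ℕ), h⟩
  · exact aux_sum_ite_ne' u ⟨(j:ℕ) - k, by omega⟩

lemma Z_vecMul {k q : ℕ} (u : Fin k → ZMod q) (j : Fin (2 * k + 1)) :
    Matrix.vecMul u (Gmod (Ztilde k) q) j =
      if h : (j : ℕ) < k then u ⟨j, h⟩
      else if h2 : (j : ℕ) < 2 * k then (∑ i, u i) - u ⟨(j : ℕ) - k, by omega⟩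
      else ∑ i, u i := by
  simp only [Matrix.vecMul, dotProduct, Gmod, Ztilde, Matrix.map_apply,
    Matrix.of_apply]
  split_ifs with h h2
  · exact aux_sum_ite_eq u ⟨(j:ℕ), h⟩
  · exact aux_sum_ite_ne' u ⟨(j:ℕ) - k, by omega⟩
  · simp

lemma hammingNorm_eq {n : ℕ} {β : Type*} [DecidableEq β] [Zero β] (c : Fin n → β) :
    hammingNorm c = (Finset.univ.filter fun j => c j ≠ 0).card := rfl

/- ## minWt bounds interface -/

lemma minWt_le {k n q m : ℕ} (G : Matrix (Fin k) (Fin n) ℤ) (u : Fin k → ZMod q)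
    (h0 : Matrix.vecMul u (Gmod G q) ≠ 0)
    (hw : hammingNorm (Matrix.vecMul u (Gmod G q)) ≤ m) :
    minWt G q ≤ (m : ℕ∞) := by
  set c := Matrix.vecMul u (Gmod G q) with hc
  calc minWt G q ≤ ⨅ (_ : c ∈ code G q) (_ : c ≠ 0), (hammingNorm c : ℕ∞) :=
        iInf_le _ c
    _ = (hammingNorm c : ℕ∞) := by rw [iInf_pos ⟨u, rfl⟩, iInf_pos h0]
    _ ≤ (m : ℕ∞) := Nat.cast_le.2 hw

lemma le_minWt {k n q m : ℕ} (G : Matrix (Fin k) (Fin n) ℤ)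
    (h : ∀ u : Fin k → ZMod q, u ≠ 0 →
      m ≤ hammingNorm (Matrix.vecMul u (Gmod G q))) :
    (m : ℕ∞) ≤ minWt G q := by
  refine le_iInf fun c => le_iInf fun hc => le_iInf fun hne => ?_
  obtain ⟨u, rfl⟩ := hc
  have hu : u ≠ 0 := by
    rintro rfl
    exact hne (Matrix.zero_vecMul _)
  exact Nat.cast_le.2 (h u hu)


/- ## lower bounds -/

lemma exists_two_ne {k q : ℕ} (u : Fin k → ZMod q) (hu : u ≠ 0)
    (hs : ∑ i, u i = 0) :
    ∃ i₁ i₂ : Fin k, i₁ ≠ i₂ ∧ u i₁ ≠ 0 ∧ u i₂ ≠ 0 := by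
  obtain ⟨i₁, hi₁⟩ : ∃ i, u i ≠ 0 := by
    by_contra hcon; push_neg at hcon; exact hu (funext hcon)
  by_contra hcon
  push_neg at hcon
  have hz : ∀ b : Fin k, b ≠ i₁ → u b = 0 := by
    intro b hb
    by_contra hb0
    exact hb0 (hcon i₁ b (Ne.symm hb) hi₁)
  have : ∑ i, u i = u i₁ :=
    Finset.sum_eq_single i₁ (fun b _ hb => hz b hb) (by simp)
  exact hi₁ (by rw [← this, hs])

lemma N_lower {k q : ℕ} (hk : 2 ≤ k) (u : Fin k → ZMod q) (hu : u ≠ 0) :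
    min k 4 ≤ hammingNorm (Matrix.vecMul u (Gmod (Ntilde k) q)) := by
  set c := Matrix.vecMul u (Gmod (Ntilde k) q) with hc
  set F := Finset.univ.filter fun j => c j ≠ 0 with hF
  rw [hammingNorm_eq]
  by_cases hs : ∑ i, u i = 0
  · obtain ⟨i₁, i₂, hne, h1, h2⟩ := exists_two_ne u hu hs
    have l1 : (i₁ : ℕ) < 2 * k := by omega
    have l2 : (i₂ : ℕ) < 2 * k := by omega
    have l3 : (i₁ : ℕ) + k < 2 * k := by omega
    have l4 : (i₂ : ℕ) + k < 2 * k := by omega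
    set S : Finset (Fin (2 * k)) :=
      {⟨i₁, l1⟩, ⟨i₂, l2⟩, ⟨(i₁:ℕ) + k, l3⟩, ⟨(i₂:ℕ) + k, l4⟩} with hS
    have hc1 : ∀ (i : Fin k) (l : (i:ℕ) < 2 * k), c ⟨i, l⟩ = u i := by
      intro i l
      rw [hc, N_vecMul, dif_pos i.isLt]
    have hc2 : ∀ (i : Fin k) (l : (i:ℕ) + k < 2 * k), c ⟨(i:ℕ) + k, l⟩ = - u i := by
      intro i l
      have hnlt : ¬ ((i:ℕ) + k < k) := by omega
      rw [hc, N_vecMul, dif_neg hnlt]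
      have : ((i:ℕ) + k - k) = (i : ℕ) := by omega
      simp only [this, Fin.eta, hs, zero_sub]
    have hsub : S ⊆ F := by
      intro j hj
      rw [hF, Finset.mem_filter]
      refine ⟨Finset.mem_univ _, ?_⟩
      simp only [hS, Finset.mem_insert, Finset.mem_singleton] at hj
      rcases hj with rfl | rfl | rfl | rfl
      · rw [hc1]; exact h1
      · rw [hc1]; exact h2
      · rw [hc2]; exact neg_ne_zero.2 h1
      · rw [hc2]; exact neg_ne_zero.2 h2
    have hv : (i₁ : ℕ) ≠ (i₂ : ℕ) := fun hc => hne (Fin.ext hc)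
    have hik : (i₁ : ℕ) < k := i₁.isLt
    have hik2 : (i₂ : ℕ) < k := i₂.isLt
    have hcard : S.card = 4 := by
      rw [hS]
      rw [Finset.card_insert_of_notMem, Finset.card_insert_of_notMem,
        Finset.card_insert_of_notMem, Finset.card_singleton]
      · simp only [Finset.mem_singleton, Fin.mk.injEq]; omega
      · simp only [Finset.mem_insert, Finset.mem_singleton, Fin.mk.injEq]; omega
      · simp only [Finset.mem_insert, Finset.mem_singleton, Fin.mk.injEq]; omega
    calc min k 4 ≤ 4 := min_le_right _ _
      _ = S.card := hcard.symm
      _ ≤ F.card := Finset.card_le_card hsub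
  · set f : Fin k → Fin (2 * k) :=
      fun i => if u i = 0 then ⟨(i:ℕ) + k, by omega⟩ else ⟨(i:ℕ), by omega⟩ with hf
    have hmem : ∀ i, f i ∈ F := by
      intro i
      rw [hF, Finset.mem_filter]
      refine ⟨Finset.mem_univ _, ?_⟩
      simp only [hf]
      by_cases h0 : u i = 0
      · rw [if_pos h0, hc, N_vecMul, dif_neg (by omega : ¬ ((i:ℕ) + k < k))]
        have : ((i:ℕ) + k - k) = (i : ℕ) := by omega
        simp only [this, Fin.eta, h0, sub_zero]
        exact hs
      · rw [if_neg h0, hc, N_vecMul, dif_pos i.isLt]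
        simpa using h0
    have hinj : Function.Injective f := by
      intro a b hab
      have ha := a.isLt
      have hb := b.isLt
      simp only [hf] at hab
      split_ifs at hab <;>
        · rw [Fin.mk.injEq] at hab
          exact Fin.ext (by omega)
    calc min k 4 ≤ k := min_le_left _ _
      _ = (Finset.univ.image f).card := by
          rw [Finset.card_image_of_injective _ hinj, Finset.card_univ,
            Fintype.card_fin]
      _ ≤ F.card := Finset.card_le_card (Finset.image_subset_iff.2 fun i _ => hmem i)

lemma Z_lower {k q : ℕ} (hk : 2 ≤ k) (u : Fin k → ZMod q) (hu : u ≠ 0) :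
    min (k + 1) 4 ≤ hammingNorm (Matrix.vecMul u (Gmod (Ztilde k) q)) := by
  set c := Matrix.vecMul u (Gmod (Ztilde k) q) with hc
  set F := Finset.univ.filter fun j => c j ≠ 0 with hF
  rw [hammingNorm_eq]
  have hc1 : ∀ (i : Fin k) (l : (i:ℕ) < 2 * k + 1), c ⟨i, l⟩ = u i := by
    intro i l
    rw [hc, Z_vecMul, dif_pos i.isLt]
  have hc2 : ∀ (i : Fin k) (l : (i:ℕ) + k < 2 * k + 1),
      c ⟨(i:ℕ) + k, l⟩ = (∑ i, u i) - u i := by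
    intro i l
    have h1 : ¬ ((i:ℕ) + k < k) := by omega
    have h2 : ((i:ℕ) + k < 2 * k) := by omega
    rw [hc, Z_vecMul, dif_neg h1, dif_pos h2]
    have : ((i:ℕ) + k - k) = (i : ℕ) := by omega
    simp only [this, Fin.eta]
  have hc3 : c ⟨2 * k, by omega⟩ = ∑ i, u i := by
    rw [hc, Z_vecMul, dif_neg (by simp only [Fin.val_mk]; omega),
      dif_neg (by simp only [Fin.val_mk]; omega)]
  by_cases hs : ∑ i, u i = 0
  · obtain ⟨i₁, i₂, hne, h1, h2⟩ := exists_two_ne u hu hs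
    set S : Finset (Fin (2 * k + 1)) :=
      {⟨i₁, by omega⟩, ⟨i₂, by omega⟩, ⟨(i₁:ℕ) + k, by omega⟩,
        ⟨(i₂:ℕ) + k, by omega⟩} with hS
    have hsub : S ⊆ F := by
      intro j hj
      rw [hF, Finset.mem_filter]
      refine ⟨Finset.mem_univ _, ?_⟩
      simp only [hS, Finset.mem_insert, Finset.mem_singleton] at hj
      rcases hj with rfl | rfl | rfl | rfl
      · rw [hc1]; exact h1
      · rw [hc1]; exact h2
      · rw [hc2, hs, zero_sub]; exact neg_ne_zero.2 h1
      · rw [hc2, hs, zero_sub]; exact neg_ne_zero.2 h2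
    have hv : (i₁ : ℕ) ≠ (i₂ : ℕ) := fun hc => hne (Fin.ext hc)
    have hik : (i₁ : ℕ) < k := i₁.isLt
    have hik2 : (i₂ : ℕ) < k := i₂.isLt
    have hcard : S.card = 4 := by
      rw [hS]
      rw [Finset.card_insert_of_notMem, Finset.card_insert_of_notMem,
        Finset.card_insert_of_notMem, Finset.card_singleton]
      · simp only [Finset.mem_singleton, Fin.mk.injEq]; omega
      · simp only [Finset.mem_insert, Finset.mem_singleton, Fin.mk.injEq]; omega
      · simp only [Finset.mem_insert, Finset.mem_singleton, Fin.mk.injEq]; omega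
    calc min (k + 1) 4 ≤ 4 := min_le_right _ _
      _ = S.card := hcard.symm
      _ ≤ F.card := Finset.card_le_card hsub
  · set f : Fin k → Fin (2 * k + 1) :=
      fun i => if u i = 0 then ⟨(i:ℕ) + k, by omega⟩ else ⟨(i:ℕ), by omega⟩ with hf
    have hmem : ∀ i, f i ∈ F := by
      intro i
      rw [hF, Finset.mem_filter]
      refine ⟨Finset.mem_univ _, ?_⟩
      simp only [hf]
      by_cases h0 : u i = 0
      · rw [if_pos h0, hc2]
        rw [h0, sub_zero]
        exact hs
      · rw [if_neg h0, hc1]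
        exact h0
    have hinj : Function.Injective f := by
      intro a b hab
      have ha := a.isLt
      have hb := b.isLt
      simp only [hf] at hab
      split_ifs at hab <;>
        · rw [Fin.mk.injEq] at hab
          exact Fin.ext (by omega)
    have hlast : (⟨2 * k, by omega⟩ : Fin (2 * k + 1)) ∉ Finset.univ.image f := by
      simp only [Finset.mem_image, Finset.mem_univ, true_and, not_exists]
      intro i
      simp only [hf]
      have := i.isLt
      split_ifs <;>
        · intro hcon
          rw [Fin.mk.injEq] at hcon
          omega
    have hcard : (insert (⟨2 * k, by omega⟩ : Fin (2 * k + 1))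
        (Finset.univ.image f)).card = k + 1 := by
      rw [Finset.card_insert_of_notMem hlast,
        Finset.card_image_of_injective _ hinj, Finset.card_univ, Fintype.card_fin]
    have hsub : insert (⟨2 * k, by omega⟩ : Fin (2 * k + 1))
        (Finset.univ.image f) ⊆ F := by
      intro j hj
      rcases Finset.mem_insert.1 hj with rfl | hj
      · rw [hF, Finset.mem_filter]
        exact ⟨Finset.mem_univ _, by rw [hc3]; exact hs⟩
      · obtain ⟨i, -, rfl⟩ := Finset.mem_image.1 hj
        exact hmem i
    calc min (k + 1) 4 ≤ k + 1 := min_le_left _ _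
      _ = _ := hcard.symm
      _ ≤ F.card := Finset.card_le_card hsub


/- ## upper bounds -/

lemma N_upper_k {k q : ℕ} [Fact (1 < q)] (hk : 2 ≤ k) :
    minWt (Ntilde k) q ≤ (k : ℕ∞) := by
  set u : Fin k → ZMod q := Pi.single ⟨0, by omega⟩ 1 with hu
  set c := Matrix.vecMul u (Gmod (Ntilde k) q) with hc
  have hcval : ∀ j : Fin (2 * k), c j =
      if h : (j : ℕ) < k then u ⟨j, h⟩ else 1 - u ⟨(j : ℕ) - k, by omega⟩ := by
    intro j
    rw [hc, N_vecMul]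
    have hsum : ∑ i, u i = 1 := by
      rw [hu, Finset.sum_pi_single']
      simp
    rw [hsum]
  have huval : ∀ i : Fin k, u i = if (i : ℕ) = 0 then 1 else 0 := by
    intro i
    rw [hu, Pi.single_apply]
    congr 1
    simp [Fin.ext_iff]
  have h0 : c ≠ 0 := by
    intro hz
    have h00 := congrFun hz ⟨0, by omega⟩
    rw [hcval, dif_pos (by simp only [Fin.val_mk]; omega), huval] at h00
    rw [if_pos (by simp only [Fin.val_mk])] at h00
    exact one_ne_zero h00
  refine minWt_le _ u h0 ?_
  rw [hammingNorm_eq]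
  set F := Finset.univ.filter fun j => c j ≠ 0 with hF
  have fact : ∀ j ∈ F, (j : ℕ) = 0 ∨ (k < (j : ℕ) ∧ (j : ℕ) < 2 * k) := by
    intro j hj
    have hjne : c j ≠ 0 := (Finset.mem_filter.1 hj).2
    have hjlt := j.isLt
    rw [hcval] at hjne
    by_cases h : (j : ℕ) < k
    · rw [dif_pos h, huval] at hjne
      left
      by_contra hne
      rw [if_neg (by simpa using hne)] at hjne
      exact hjne rfl
    · rw [dif_neg h, huval] at hjne
      right
      refine ⟨?_, hjlt⟩
      by_contra hne
      have hjk : (j : ℕ) = k := by omega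
      rw [if_pos (by simp only [Fin.val_mk]; omega)] at hjne
      exact hjne (sub_self 1)
  set g : Fin (2 * k) → Fin k :=
    fun j => if h : (j : ℕ) < k then ⟨0, by omega⟩ else ⟨(j : ℕ) - k, by omega⟩
      with hg
  calc F.card ≤ (Finset.univ : Finset (Fin k)).card := by
        refine Finset.card_le_card_of_injOn g (fun a _ => Finset.mem_univ _) ?_
        intro a ha b hb hab
        have pa := fact a (by simpa using ha)
        have pb := fact b (by simpa using hb)
        have hal := a.isLt
        have hbl := b.isLt
        simp only [hg] at hab
        split_ifs at hab <;>
          · have hv := congrArg Fin.val hab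
            simp only [Fin.val_mk] at hv
            exact Fin.ext (by omega)
    _ = k := by rw [Finset.card_univ, Fintype.card_fin]

lemma N_upper_4 {k q : ℕ} [Fact (1 < q)] (hk : 2 ≤ k) :
    minWt (Ntilde k) q ≤ (4 : ℕ∞) := by
  set u : Fin k → ZMod q :=
    Pi.single ⟨0, by omega⟩ 1 + Pi.single ⟨1, by omega⟩ (-1) with hu
  set c := Matrix.vecMul u (Gmod (Ntilde k) q) with hc
  have huval : ∀ i : Fin k, u i =
      (if (i : ℕ) = 0 then 1 else 0) + (if (i : ℕ) = 1 then -1 else 0) := by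
    intro i
    rw [hu, Pi.add_apply, Pi.single_apply, Pi.single_apply]
    congr 1 <;> · congr 1; simp [Fin.ext_iff]
  have hsum : ∑ i, u i = 0 := by
    rw [hu]
    simp only [Pi.add_apply]
    rw [Finset.sum_add_distrib, Finset.sum_pi_single', Finset.sum_pi_single']
    simp
  have hcval : ∀ j : Fin (2 * k), c j =
      if h : (j : ℕ) < k then u ⟨j, h⟩ else - u ⟨(j : ℕ) - k, by omega⟩ := by
    intro j
    rw [hc, N_vecMul, hsum]
    split_ifs <;> [rfl; rw [zero_sub]]
  have h0 : c ≠ 0 := by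
    intro hz
    have h00 := congrFun hz ⟨0, by omega⟩
    rw [hcval, dif_pos (by simp only [Fin.val_mk]; omega), huval] at h00
    rw [if_pos (by simp only [Fin.val_mk]),
      if_neg (by simp only [Fin.val_mk]; omega)] at h00
    rw [add_zero] at h00
    exact one_ne_zero h00
  refine le_trans (minWt_le (m := 4) _ u h0 ?_) (by norm_num)
  rw [hammingNorm_eq]
  have huzero : ∀ i : Fin k, (i : ℕ) ≠ 0 → (i : ℕ) ≠ 1 → u i = 0 := by
    intro i h1 h2
    rw [huval, if_neg h1, if_neg h2, add_zero]
  have fact : ∀ j : Fin (2 * k), c j ≠ 0 →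
      (j : ℕ) = 0 ∨ (j : ℕ) = 1 ∨ (j : ℕ) = k ∨ (j : ℕ) = k + 1 := by
    intro j hjne
    have hjlt := j.isLt
    rw [hcval] at hjne
    by_cases h : (j : ℕ) < k
    · rw [dif_pos h] at hjne
      by_contra hne
      push_neg at hne
      rw [huzero _ (by simp only [Fin.val_mk]; omega)
        (by simp only [Fin.val_mk]; omega)] at hjne
      exact hjne rfl
    · rw [dif_neg h] at hjne
      by_contra hne
      push_neg at hne
      rw [huzero _ (by simp only [Fin.val_mk]; omega)
        (by simp only [Fin.val_mk]; omega), neg_zero] at hjne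
      exact hjne rfl
  set S : Finset (Fin (2 * k)) :=
    {⟨0, by omega⟩, ⟨1, by omega⟩, ⟨k, by omega⟩, ⟨k + 1, by omega⟩} with hS
  have hsub : (Finset.univ.filter fun j => c j ≠ 0) ⊆ S := by
    intro j hj
    have := fact j (Finset.mem_filter.1 hj).2
    simp only [hS, Finset.mem_insert, Finset.mem_singleton, Fin.ext_iff,
      Fin.val_mk]
    omega
  calc (Finset.univ.filter fun j => c j ≠ 0).card ≤ S.card :=
        Finset.card_le_card hsub
    _ ≤ 3 + 1 := Finset.card_insert_le _ _ |>.trans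
        (Nat.add_le_add_right (Finset.card_insert_le _ _ |>.trans
          (Nat.add_le_add_right (Finset.card_insert_le _ _ |>.trans
            (Nat.add_le_add_right (Finset.card_singleton _).le 1)) 1)) 1)
    _ = 4 := rfl


lemma Z_upper_k {k q : ℕ} [Fact (1 < q)] (hk : 2 ≤ k) :
    minWt (Ztilde k) q ≤ ((k + 1 : ℕ) : ℕ∞) := by
  set u : Fin k → ZMod q := Pi.single ⟨0, by omega⟩ 1 with hu
  set c := Matrix.vecMul u (Gmod (Ztilde k) q) with hc
  have hsum : ∑ i, u i = 1 := by
    rw [hu, Finset.sum_pi_single']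
    simp
  have hcval : ∀ j : Fin (2 * k + 1), c j =
      if h : (j : ℕ) < k then u ⟨j, h⟩
      else if h2 : (j : ℕ) < 2 * k then 1 - u ⟨(j : ℕ) - k, by omega⟩
      else 1 := by
    intro j
    rw [hc, Z_vecMul, hsum]
  have huval : ∀ i : Fin k, u i = if (i : ℕ) = 0 then 1 else 0 := by
    intro i
    rw [hu, Pi.single_apply]
    congr 1
    simp [Fin.ext_iff]
  have h0 : c ≠ 0 := by
    intro hz
    have h00 := congrFun hz ⟨0, by omega⟩
    rw [hcval, dif_pos (by simp only [Fin.val_mk]; omega), huval] at h00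
    rw [if_pos (by simp only [Fin.val_mk])] at h00
    exact one_ne_zero h00
  refine minWt_le _ u h0 ?_
  rw [hammingNorm_eq]
  set F := Finset.univ.filter fun j => c j ≠ 0 with hF
  have fact : ∀ j ∈ F, (j : ℕ) = 0 ∨ (k < (j : ℕ) ∧ (j : ℕ) < 2 * k) ∨
      (j : ℕ) = 2 * k := by
    intro j hj
    have hjne : c j ≠ 0 := (Finset.mem_filter.1 hj).2
    have hjlt := j.isLt
    rw [hcval] at hjne
    by_cases h : (j : ℕ) < k
    · rw [dif_pos h, huval] at hjne
      left
      by_contra hne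
      rw [if_neg (by simpa using hne)] at hjne
      exact hjne rfl
    · by_cases h2 : (j : ℕ) < 2 * k
      · rw [dif_neg h, dif_pos h2, huval] at hjne
        right; left
        refine ⟨?_, h2⟩
        by_contra hne
        rw [if_pos (by simp only [Fin.val_mk]; omega)] at hjne
        exact hjne (sub_self 1)
      · right; right; omega
  set g : Fin (2 * k + 1) → Fin (k + 1) :=
    fun j => if h : (j : ℕ) < k then ⟨0, by omega⟩
      else if h2 : (j : ℕ) < 2 * k then ⟨(j : ℕ) - k, by omega⟩
      else ⟨k, by omega⟩ with hg
  calc F.card ≤ (Finset.univ : Finset (Fin (k + 1))).card := by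
        refine Finset.card_le_card_of_injOn g (fun a _ => Finset.mem_univ _) ?_
        intro a ha b hb hab
        have pa := fact a (by simpa using ha)
        have pb := fact b (by simpa using hb)
        have hal := a.isLt
        have hbl := b.isLt
        simp only [hg] at hab
        split_ifs at hab <;>
          · have hv := congrArg Fin.val hab
            simp only [Fin.val_mk] at hv
            exact Fin.ext (by omega)
    _ = k + 1 := by rw [Finset.card_univ, Fintype.card_fin]

lemma Z_upper_4 {k q : ℕ} [Fact (1 < q)] (hk : 2 ≤ k) :
    minWt (Ztilde k) q ≤ (4 : ℕ∞) := by
  set u : Fin k → ZMod q :=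
    Pi.single ⟨0, by omega⟩ 1 + Pi.single ⟨1, by omega⟩ (-1) with hu
  set c := Matrix.vecMul u (Gmod (Ztilde k) q) with hc
  have huval : ∀ i : Fin k, u i =
      (if (i : ℕ) = 0 then 1 else 0) + (if (i : ℕ) = 1 then -1 else 0) := by
    intro i
    rw [hu, Pi.add_apply, Pi.single_apply, Pi.single_apply]
    congr 1 <;> · congr 1; simp [Fin.ext_iff]
  have hsum : ∑ i, u i = 0 := by
    rw [hu]
    simp only [Pi.add_apply]
    rw [Finset.sum_add_distrib, Finset.sum_pi_single', Finset.sum_pi_single']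
    simp
  have hcval : ∀ j : Fin (2 * k + 1), c j =
      if h : (j : ℕ) < k then u ⟨j, h⟩
      else if h2 : (j : ℕ) < 2 * k then - u ⟨(j : ℕ) - k, by omega⟩
      else 0 := by
    intro j
    rw [hc, Z_vecMul, hsum]
    split_ifs <;> [rfl; rw [zero_sub]; rfl]
  have h0 : c ≠ 0 := by
    intro hz
    have h00 := congrFun hz ⟨0, by omega⟩
    rw [hcval, dif_pos (by simp only [Fin.val_mk]; omega), huval] at h00
    rw [if_pos (by simp only [Fin.val_mk]),
      if_neg (by simp only [Fin.val_mk]; omega)] at h00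
    rw [add_zero] at h00
    exact one_ne_zero h00
  refine le_trans (minWt_le (m := 4) _ u h0 ?_) (by norm_num)
  rw [hammingNorm_eq]
  have huzero : ∀ i : Fin k, (i : ℕ) ≠ 0 → (i : ℕ) ≠ 1 → u i = 0 := by
    intro i h1 h2
    rw [huval, if_neg h1, if_neg h2, add_zero]
  have fact : ∀ j : Fin (2 * k + 1), c j ≠ 0 →
      (j : ℕ) = 0 ∨ (j : ℕ) = 1 ∨ (j : ℕ) = k ∨ (j : ℕ) = k + 1 := by
    intro j hjne
    have hjlt := j.isLt
    rw [hcval] at hjne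
    by_cases h : (j : ℕ) < k
    · rw [dif_pos h] at hjne
      by_contra hne
      push_neg at hne
      rw [huzero _ (by simp only [Fin.val_mk]; omega)
        (by simp only [Fin.val_mk]; omega)] at hjne
      exact hjne rfl
    · by_cases h2 : (j : ℕ) < 2 * k
      · rw [dif_neg h, dif_pos h2] at hjne
        by_contra hne
        push_neg at hne
        rw [huzero _ (by simp only [Fin.val_mk]; omega)
          (by simp only [Fin.val_mk]; omega), neg_zero] at hjne
        exact hjne rfl
      · rw [dif_neg h, dif_neg h2] at hjne
        exact absurd rfl hjne
  set S : Finset (Fin (2 * k + 1)) :=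
    {⟨0, by omega⟩, ⟨1, by omega⟩, ⟨k, by omega⟩, ⟨k + 1, by omega⟩} with hS
  have hsub : (Finset.univ.filter fun j => c j ≠ 0) ⊆ S := by
    intro j hj
    have := fact j (Finset.mem_filter.1 hj).2
    simp only [hS, Finset.mem_insert, Finset.mem_singleton, Fin.ext_iff,
      Fin.val_mk]
    omega
  calc (Finset.univ.filter fun j => c j ≠ 0).card ≤ S.card :=
        Finset.card_le_card hsub
    _ ≤ 3 + 1 := Finset.card_insert_le _ _ |>.trans
        (Nat.add_le_add_right (Finset.card_insert_le _ _ |>.trans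
          (Nat.add_le_add_right (Finset.card_insert_le _ _ |>.trans
            (Nat.add_le_add_right (Finset.card_singleton _).le 1)) 1)) 1)
    _ = 4 := rfl

/- ## assembly -/

lemma minWt_N {k q : ℕ} [Fact (1 < q)] (hk : 2 ≤ k) :
    minWt (Ntilde k) q = ((min k 4 : ℕ) : ℕ∞) := by
  apply le_antisymm
  · rcases le_total k 4 with h | h
    · rw [min_eq_left h]
      exact N_upper_k hk
    · rw [min_eq_right h]
      exact le_trans (N_upper_4 hk) (by norm_num)
  · exact le_minWt _ fun u hu => N_lower hk u hu

lemma minWt_Z {k q : ℕ} [Fact (1 < q)] (hk : 2 ≤ k) :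
    minWt (Ztilde k) q = ((min (k + 1) 4 : ℕ) : ℕ∞) := by
  apply le_antisymm
  · rcases le_total (k + 1) 4 with h | h
    · rw [min_eq_left h]
      exact Z_upper_k hk
    · rw [min_eq_right h]
      exact le_trans (Z_upper_4 hk) (by norm_num)
  · exact le_minWt _ fun u hu => Z_lower hk u hu

theorem stmt17 (k q : ℕ) (hk : 2 ≤ k) (hq : 2 ≤ q) :
    minWt (Ntilde k) q = (if k < 4 then (k : ℕ∞) else 4) ∧
    minWt (Ztilde k) q = (if k < 4 then ((k : ℕ∞) + 1) else 4) := by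
  haveI : Fact (1 < q) := ⟨hq⟩
  constructor
  · rw [minWt_N hk]
    split_ifs with h
    · rw [min_eq_left (by omega)]
    · rw [min_eq_right (by omega)]
      norm_num
  · rw [minWt_Z hk]
    split_ifs with h
    · rw [min_eq_left (by omega)]
      push_cast
      ring
    · rw [min_eq_right (by omega)]
      norm_num

end ArrCode
end

section
/- For all integers k ≥ 2 and q ≥ 1, the following hold: q · χ^quasi_{Ž_k}(q) = (q−1)(q−2)^k − (−2)^k(2q−1) + (−1)^k · q · Σ_{j=0}^{k} C(k,j) · gcd(j−1, q), and q · χ^quasi_{Ñ_k}(q) = (q−1)^k + (−1)^k(q−1) + q · χ^quasi_{Ž_k}(q), where C(k,j) is the binomial coefficient and gcd denotes the nonnegative gcd of integers (so gcd(−1, q) = 1 and gcd(0, q) = q). -/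
open scoped BigOperators

section
open Finset

namespace ArrCodeAux

variable {q : ℕ} [NeZero q]

def eSet (F : Finset (ZMod q)) (m : ℕ) (t : ZMod q) : Finset (Fin m → ZMod q) :=
  Finset.univ.filter fun u => (∀ i, u i ∉ F) ∧ ∑ i, u i = t

lemma eSet_zero (F : Finset (ZMod q)) (t : ZMod q) :
    (eSet F 0 t).card = if t = 0 then 1 else 0 := by
  unfold eSet
  rcases eq_or_ne t 0 with h | h
  · subst h
    rw [Finset.filter_true_of_mem (fun u _ => ⟨fun i => i.elim0, by simp⟩)]
    simp
  · rw [Finset.filter_false_of_mem, Finset.card_empty, if_neg h]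
    intro u _ hc
    exact h (by rw [← hc.2]; simp)

lemma eSet_succ (F : Finset (ZMod q)) (m : ℕ) (t : ZMod q) :
    (eSet F (m+1) t).card = ∑ a ∈ univ.filter (· ∉ F), (eSet F m (t - a)).card := by
  rw [Finset.card_eq_sum_card_fiberwise (f := fun u => u 0)
    (t := univ.filter (· ∉ F)) (fun u hu => by
      simp only [eSet, Finset.mem_coe, mem_filter, mem_univ, true_and] at hu ⊢
      exact hu.1 0)]
  refine Finset.sum_congr rfl fun a ha => ?_
  simp only [mem_filter, mem_univ, true_and] at ha
  refine Finset.card_bij' (fun u _ => Fin.tail u) (fun v _ => Fin.cons a v) ?_ ?_ ?_ ?_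
  · intro u hu
    simp only [eSet, mem_filter, mem_univ, true_and] at hu ⊢
    obtain ⟨⟨h1, h2⟩, h3⟩ := hu
    refine ⟨fun i => h1 i.succ, ?_⟩
    rw [Fin.sum_univ_succ] at h2
    rw [eq_sub_iff_add_eq, ← h3, add_comm]
    exact h2
  · intro v hv
    simp only [eSet, mem_filter, mem_univ, true_and] at hv ⊢
    obtain ⟨h1, h2⟩ := hv
    refine ⟨⟨fun i => ?_, ?_⟩, by simp⟩
    · induction i using Fin.cases with
      | zero => simpa using ha
      | succ i => simpa using h1 i
    · rw [Fin.sum_univ_succ]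
      simp only [Fin.cons_zero, Fin.cons_succ]
      rw [h2]; ring
  · intro u hu
    simp only [mem_filter] at hu
    have : a = u 0 := hu.2.symm
    subst this
    exact Fin.cons_self_tail u
  · intro v _; simp

lemma eSet_total (F : Finset (ZMod q)) (m : ℕ) :
    ∑ t, (eSet F m t).card = (univ.filter (· ∉ F)).card ^ m := by
  induction m with
  | zero => simp [eSet_zero]
  | succ m ih =>
    simp only [eSet_succ]
    rw [Finset.sum_comm]
    have h : ∀ a : ZMod q, ∑ t, (eSet F m (t - a)).card = ∑ t, (eSet F m t).card :=
      fun a => Fintype.sum_equiv (Equiv.subRight a) _ _ (fun t => rfl)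
    simp only [h, ih, Finset.sum_const, smul_eq_mul, pow_succ]
    ring

end ArrCodeAux

namespace ArrCodeAux
open Finset
variable {q : ℕ} [NeZero q]

lemma sum_shift (F : Finset (ZMod q)) (t : ZMod q) (g : ZMod q → ℕ) :
    ∑ a ∈ univ.filter (· ∉ F), g (t - a) =
      ∑ b ∈ univ.filter (fun b => t - b ∉ F), g b := by
  refine Finset.sum_nbij' (fun a => t - a) (fun b => t - b) ?_ ?_ ?_ ?_ ?_ <;>
    simp [sub_sub_cancel]

lemma card_filter_not_zero :
    ((univ.filter (· ∉ ({0} : Finset (ZMod q)))).card : ℤ) = (q : ℤ) - 1 := by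
  have h1 : univ.filter (· ∉ ({0} : Finset (ZMod q))) = univ.erase 0 := by
    ext x; simp
  rw [h1, Finset.card_erase_of_mem (mem_univ _), Finset.card_univ, ZMod.card]
  have : 1 ≤ q := NeZero.one_le
  push_cast [Nat.cast_sub this]
  ring

lemma two_le_q {s : ZMod q} (hs : s ≠ 0) : 2 ≤ q := by
  have : Nontrivial (ZMod q) := ⟨⟨s, 0, hs⟩⟩
  have := Fintype.one_lt_card_iff_nontrivial.mpr this
  rwa [ZMod.card] at this

lemma card_filter_not_pair {s : ZMod q} (hs : s ≠ 0) :
    ((univ.filter (· ∉ ({0, s} : Finset (ZMod q)))).card : ℤ) = (q : ℤ) - 2 := by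
  have h1 : univ.filter (· ∉ ({0, s} : Finset (ZMod q))) = (univ.erase 0).erase s := by
    ext x; simp [and_comm]
  rw [h1, Finset.card_erase_of_mem, Finset.card_erase_of_mem (mem_univ _),
    Finset.card_univ, ZMod.card]
  · have h2 := two_le_q hs
    have : ((q - 1 - 1 : ℕ) : ℤ) = (q : ℤ) - 2 := by omega
    rw [this]
  · simp [hs]

lemma c_formula (m : ℕ) (t : ZMod q) :
    (q : ℤ) * ((eSet ({0} : Finset (ZMod q)) m t).card : ℤ) =
      ((q : ℤ) - 1) ^ m + (-1) ^ m * ((q : ℤ) * (if t = 0 then 1 else 0) - 1) := by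
  induction m generalizing t with
  | zero => rw [eSet_zero]; split_ifs <;> simp
  | succ m ih =>
    have h1 : (eSet ({0} : Finset (ZMod q)) (m+1) t).card
        = ∑ b ∈ univ.erase t, (eSet ({0} : Finset (ZMod q)) m b).card := by
      rw [eSet_succ,
        sum_shift ({0} : Finset (ZMod q)) t (fun b => (eSet ({0} : Finset (ZMod q)) m b).card)]
      congr 1
      ext b
      simp [sub_ne_zero, eq_comm]
    have h2 : ∑ b ∈ univ.erase t, (eSet ({0} : Finset (ZMod q)) m b).card
          + (eSet ({0} : Finset (ZMod q)) m t).card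
        = ∑ b, (eSet ({0} : Finset (ZMod q)) m b).card :=
      Finset.sum_erase_add _ _ (mem_univ t)
    have h4 : ((∑ b, (eSet ({0} : Finset (ZMod q)) m b).card : ℕ) : ℤ)
        = ((q : ℤ) - 1) ^ m := by
      rw [eSet_total]; push_cast [card_filter_not_zero]; ring
    have hE : ((eSet ({0} : Finset (ZMod q)) (m+1) t).card : ℤ)
        = ((q : ℤ) - 1) ^ m - ((eSet ({0} : Finset (ZMod q)) m t).card : ℤ) := by
      have h2' := congrArg (Nat.cast : ℕ → ℤ) h2
      push_cast at h2' h4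
      rw [h1]
      push_cast
      linarith [h4]
    linear_combination (q : ℤ) * hE - ih t

noncomputable def Ssum (s : ZMod q) (m : ℕ) (t : ZMod q) : ℤ :=
  ∑ j ∈ Finset.range (m+1), (Nat.choose m j : ℤ) *
    (if ((j : ℕ) : ZMod q) * s = t then 1 else 0)

lemma Ssum_succ (s : ZMod q) (m : ℕ) (t : ZMod q) :
    Ssum s (m+1) t = Ssum s m t + Ssum s m (t - s) := by
  unfold Ssum
  have key : ∀ j : ℕ, (if ((j : ℕ) : ZMod q) * s = t - s then (1:ℤ) else 0)
      = (if (((j+1 : ℕ) : ℕ) : ZMod q) * s = t then (1:ℤ) else 0) := by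
    intro j
    congr 1
    push_cast
    rw [add_mul, one_mul, eq_sub_iff_add_eq]
  rw [Finset.sum_range_succ' _ (m+1)]
  have expand : ∀ j ∈ Finset.range (m+1),
      ((m+1).choose (j+1) : ℤ) * (if (((j+1:ℕ)) : ZMod q) * s = t then 1 else 0)
      = (m.choose j : ℤ) * (if (((j+1:ℕ)) : ZMod q) * s = t then 1 else 0)
        + (m.choose (j+1) : ℤ) * (if (((j+1:ℕ)) : ZMod q) * s = t then 1 else 0) := by
    intro j _
    rw [Nat.choose_succ_succ]
    push_cast
    ring
  rw [Finset.sum_congr rfl expand, Finset.sum_add_distrib]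
  have e1 : ∑ j ∈ Finset.range (m+1),
      (m.choose j : ℤ) * (if (((j+1:ℕ)) : ZMod q) * s = t then 1 else 0)
      = ∑ j ∈ Finset.range (m+1), (m.choose j : ℤ) *
          (if ((j : ℕ) : ZMod q) * s = t - s then 1 else 0) := by
    refine Finset.sum_congr rfl fun j _ => ?_
    rw [key j]
  have e2 : ∑ j ∈ Finset.range (m+1),
        (m.choose (j+1) : ℤ) * (if (((j+1:ℕ)) : ZMod q) * s = t then 1 else 0)
      + ((m+1).choose 0 : ℤ) * (if ((0 : ℕ) : ZMod q) * s = t then 1 else 0)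
      = ∑ j ∈ Finset.range (m+1), (m.choose j : ℤ) *
          (if ((j : ℕ) : ZMod q) * s = t then 1 else 0) := by
    have h3 : ∑ j ∈ Finset.range (m+2), (m.choose j : ℤ) *
          (if ((j : ℕ) : ZMod q) * s = t then 1 else 0)
        = ∑ j ∈ Finset.range (m+1), (m.choose j : ℤ) *
          (if ((j : ℕ) : ZMod q) * s = t then 1 else 0) := by
      rw [Finset.sum_range_succ, Nat.choose_succ_self]
      simp
    rw [← h3, Finset.sum_range_succ' _ (m+1)]
    simp
  rw [e1] at *
  linarith [e1, e2]

lemma d_formula {s : ZMod q} (hs : s ≠ 0) (m : ℕ) (t : ZMod q) :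
    (q : ℤ) * ((eSet ({0, s} : Finset (ZMod q)) m t).card : ℤ) =
      ((q : ℤ) - 2) ^ m - (-2) ^ m + (-1) ^ m * (q : ℤ) * Ssum s m t := by
  induction m generalizing t with
  | zero =>
    rw [eSet_zero]
    unfold Ssum
    rcases eq_or_ne t 0 with h | h
    · subst h; simp
    · simp [Finset.sum_range_one, h, eq_comm]
  | succ m ih =>
    have hiff : ∀ b : ZMod q, (t - b ∉ ({0, s} : Finset (ZMod q))) ↔ (b ≠ t - s ∧ b ≠ t) := by
      intro b
      simp only [Finset.mem_insert, Finset.mem_singleton, not_or]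
      constructor
      · rintro ⟨h0, h1⟩
        exact ⟨fun hb => h1 (by rw [hb]; ring), fun hb => h0 (by rw [hb]; ring)⟩
      · rintro ⟨h0, h1⟩
        refine ⟨fun hc => h1 ?_, fun hc => h0 ?_⟩
        · linear_combination -hc
        · linear_combination -hc
    have h1 : (eSet ({0, s} : Finset (ZMod q)) (m+1) t).card
        = ∑ b ∈ (univ.erase t).erase (t - s), (eSet ({0, s} : Finset (ZMod q)) m b).card := by
      rw [eSet_succ,
        sum_shift ({0, s} : Finset (ZMod q)) t (fun b => (eSet ({0, s} : Finset (ZMod q)) m b).card)]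
      congr 1
      ext b
      simp only [mem_filter, mem_univ, true_and, Finset.mem_erase, and_true]
      exact hiff b
    have hts : t - s ∈ univ.erase t := by
      simp only [Finset.mem_erase, mem_univ, and_true, ne_eq, sub_eq_self]
      exact hs
    have h2 : ∑ b ∈ (univ.erase t).erase (t - s), (eSet ({0, s} : Finset (ZMod q)) m b).card
          + (eSet ({0, s} : Finset (ZMod q)) m (t - s)).card
        = ∑ b ∈ univ.erase t, (eSet ({0, s} : Finset (ZMod q)) m b).card :=
      Finset.sum_erase_add _ _ hts
    have h2' : ∑ b ∈ univ.erase t, (eSet ({0, s} : Finset (ZMod q)) m b).card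
          + (eSet ({0, s} : Finset (ZMod q)) m t).card
        = ∑ b, (eSet ({0, s} : Finset (ZMod q)) m b).card :=
      Finset.sum_erase_add _ _ (mem_univ t)
    have h4 : ((∑ b, (eSet ({0, s} : Finset (ZMod q)) m b).card : ℕ) : ℤ)
        = ((q : ℤ) - 2) ^ m := by
      rw [eSet_total]; push_cast [card_filter_not_pair hs]; ring
    have hE : ((eSet ({0, s} : Finset (ZMod q)) (m+1) t).card : ℤ)
        = ((q : ℤ) - 2) ^ m - ((eSet ({0, s} : Finset (ZMod q)) m t).card : ℤ)
          - ((eSet ({0, s} : Finset (ZMod q)) m (t - s)).card : ℤ) := by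
      have ha := congrArg (Nat.cast : ℕ → ℤ) h2
      have hb := congrArg (Nat.cast : ℕ → ℤ) h2'
      push_cast at ha hb h4
      rw [h1]
      push_cast
      linarith [h4]
    rw [Ssum_succ]
    linear_combination (q : ℤ) * hE - ih t - ih (t - s)

lemma count_multiples {d g : ℕ} (hq0 : q ≠ 0) (hd : d ∣ q) (hgd : q / d = g) :
    ((range q).filter (fun x => d ∣ x)).card = g := by
  have e0 : (range (q+1)).filter (fun x => d ∣ x) = insert q ((range q).filter (fun x => d ∣ x)) := by
    rw [Finset.range_add_one, Finset.filter_insert, if_pos hd]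
  have e1 : range (q+1) = insert 0 (Finset.Ioc 0 q) := by
    ext x; simp only [Finset.mem_range, Finset.mem_insert, Finset.mem_Ioc]; omega
  have e2 : (range (q+1)).filter (fun x => d ∣ x)
      = insert 0 ((Finset.Ioc 0 q).filter (fun x => d ∣ x)) := by
    rw [e1, Finset.filter_insert, if_pos (dvd_zero d)]
  have c0 : ((range (q+1)).filter (fun x => d ∣ x)).card
      = ((range q).filter (fun x => d ∣ x)).card + 1 := by
    rw [e0, Finset.card_insert_of_notMem (by simp)]
  have c1 : ((range (q+1)).filter (fun x => d ∣ x)).card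
      = ((Finset.Ioc 0 q).filter (fun x => d ∣ x)).card + 1 := by
    rw [e2, Finset.card_insert_of_notMem (by simp)]
  have := Nat.Ioc_filter_dvd_card_eq_div q d
  omega

lemma gcd_count_nat (a : ℕ) :
    (univ.filter fun s : ZMod q => (a : ZMod q) * s = 0).card = Nat.gcd a q := by
  have hq0 : q ≠ 0 := NeZero.ne q
  have hqpos : 0 < q := Nat.pos_of_ne_zero hq0
  set g := Nat.gcd a q with hg
  have hgq : g ∣ q := Nat.gcd_dvd_right a q
  have hga : g ∣ a := Nat.gcd_dvd_left a q
  have hg0 : 0 < g := Nat.gcd_pos_of_pos_right a hqpos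
  set d := q / g with hd
  have hdq : d ∣ q := Nat.div_dvd_of_dvd hgq
  have hgd : g * d = q := Nat.mul_div_cancel' hgq
  have key : ∀ x : ℕ, (q ∣ a * x ↔ d ∣ x) := by
    intro x
    constructor
    · intro h
      have ha' : a = g * (a / g) := (Nat.mul_div_cancel' hga).symm
      rw [ha', ← hgd, mul_assoc] at h
      have h2 : d ∣ (a / g) * x := (mul_dvd_mul_iff_left hg0.ne').mp h
      have hco : Nat.Coprime (a / g) d := Nat.coprime_div_gcd_div_gcd hg0
      exact (Nat.Coprime.dvd_of_dvd_mul_left hco.symm) (by rwa [mul_comm] at h2 ⊢ <;> skip)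
    · rintro ⟨y, rfl⟩
      refine ⟨(a / g) * y, ?_⟩
      rw [← hgd]
      calc a * (d * y) = (g * (a / g)) * (d * y) := by rw [Nat.mul_div_cancel' hga]
        _ = g * d * (a / g * y) := by ring
  have hmemiff : ∀ s : ZMod q, ((a : ZMod q) * s = 0 ↔ d ∣ s.val) := by
    intro s
    have hv : ((s.val : ℕ) : ZMod q) = s := by
      rw [ZMod.natCast_val, ZMod.cast_id]
    have : (a : ZMod q) * s = ((a * s.val : ℕ) : ZMod q) := by
      push_cast
      rw [hv]
    rw [this, ZMod.natCast_eq_zero_iff, key]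
  have hbij : (univ.filter fun s : ZMod q => (a : ZMod q) * s = 0).card
      = ((range q).filter (fun x => d ∣ x)).card := by
    refine Finset.card_bij' (fun s _ => s.val) (fun x _ => (x : ZMod q)) ?_ ?_ ?_ ?_
    · intro s hsmem
      simp only [mem_filter, mem_univ, true_and, Finset.mem_range] at hsmem ⊢
      exact ⟨ZMod.val_lt s, (hmemiff s).mp hsmem⟩
    · intro x hx
      simp only [mem_filter, Finset.mem_range, mem_univ, true_and] at hx ⊢
      rw [hmemiff, ZMod.val_cast_of_lt hx.1]
      exact hx.2
    · intro s _
      show ((s.val : ℕ) : ZMod q) = s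
      rw [ZMod.natCast_val, ZMod.cast_id]
    · intro x hx
      simp only [mem_filter, Finset.mem_range] at hx
      exact ZMod.val_cast_of_lt hx.1
  rw [hbij, count_multiples hq0 hdq (Nat.div_div_self hgq hq0)]

lemma gcd_count_int (a : ℤ) :
    (univ.filter fun s : ZMod q => (a : ZMod q) * s = 0).card = Int.gcd a q := by
  have key : ∀ s : ZMod q, ((a : ZMod q) * s = 0) ↔ ((a.natAbs : ZMod q) * s = 0) := by
    intro s
    rcases Int.natAbs_eq a with h | h
    · conv_lhs => rw [h]
      rw [Int.cast_natCast]
    · conv_lhs => rw [h]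
      rw [Int.cast_neg, Int.cast_natCast, neg_mul, neg_eq_zero]
  rw [Finset.filter_congr (fun x _ => key x), gcd_count_nat]
  simp [Int.gcd, Int.natAbs_natCast]

lemma sum_ind (j : ℕ) :
    ∑ s ∈ univ.filter (· ≠ (0:ZMod q)), (if ((j:ℕ):ZMod q) * s = s then (1:ℤ) else 0)
      = (Int.gcd ((j:ℤ)-1) (q:ℤ) : ℤ) - 1 := by
  rw [Finset.sum_boole]
  have h0 : ∀ s : ZMod q, (((j:ℕ):ZMod q) * s = s) ↔ (((((j:ℤ)-1) : ℤ) : ZMod q) * s = 0) := by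
    intro s; push_cast; constructor <;> intro h <;> linear_combination h
  have he : (univ.filter (· ≠ (0:ZMod q))).filter (fun s => ((j:ℕ):ZMod q) * s = s)
      = (univ.filter fun s : ZMod q => ((((j:ℤ)-1):ℤ) : ZMod q) * s = 0).erase 0 := by
    ext s
    simp only [mem_filter, mem_univ, true_and, Finset.mem_erase, ne_eq]
    constructor
    · rintro ⟨a, b⟩; exact ⟨a, (h0 s).mp b⟩
    · rintro ⟨a, b⟩; exact ⟨a, (h0 s).mpr b⟩
  rw [he, Finset.card_erase_of_mem (by simp), gcd_count_int]
  have hpos : 0 < Int.gcd ((j:ℤ)-1) (q:ℤ) :=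
    Int.gcd_pos_iff.mpr (Or.inr (by exact_mod_cast NeZero.ne q))
  push_cast [Nat.cast_sub hpos]
  ring

lemma card_E : ((univ.filter (· ≠ (0:ZMod q))).card : ℤ) = (q:ℤ) - 1 := by
  rw [Finset.filter_ne', Finset.card_erase_of_mem (mem_univ _), Finset.card_univ, ZMod.card]
  have : 1 ≤ q := NeZero.one_le
  push_cast [Nat.cast_sub this]
  ring

end ArrCodeAux

end


namespace ArrCode

section
open Finset
variable {k q : ℕ}


lemma sum_delta (u : Fin k → ZMod q) (c : Fin k) :
    ∑ i, u i * (((if (i : ℕ) = (c : ℕ) then (1:ℤ) else 0) : ℤ) : ZMod q) = u c := by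
  have h : ∀ i : Fin k, u i * (((if (i : ℕ) = (c : ℕ) then (1:ℤ) else 0) : ℤ) : ZMod q)
      = if i = c then u i else 0 := by
    intro i
    by_cases h : i = c
    · simp [h]
    · rw [if_neg (fun hc => h (Fin.ext hc)), if_neg h]
      simp
  rw [Finset.sum_congr rfl fun i _ => h i, Finset.sum_ite_eq' univ c u]
  simp

lemma sum_codelta (u : Fin k → ZMod q) (c : Fin k) :
    ∑ i, u i * (((if (i : ℕ) = (c : ℕ) then (0:ℤ) else 1) : ℤ) : ZMod q)
      = (∑ i, u i) - u c := by
  have h : ∀ i : Fin k, u i * (((if (i : ℕ) = (c : ℕ) then (0:ℤ) else 1) : ℤ) : ZMod q)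
      = u i - (if i = c then u i else 0) := by
    intro i
    by_cases h : i = c
    · simp [h]
    · rw [if_neg (fun hc => h (Fin.ext hc)), if_neg h]
      simp
  rw [Finset.sum_congr rfl fun i _ => h i, Finset.sum_sub_distrib,
    Finset.sum_ite_eq' univ c u]
  simp

lemma vecMul_Z1 (u : Fin k → ZMod q) (j : Fin (2*k+1)) (hj : (j:ℕ) < k) :
    Matrix.vecMul u (Gmod (Ztilde k) q) j = u ⟨(j:ℕ), hj⟩ := by
  show ∑ i, u i * (Gmod (Ztilde k) q) i j = _
  have he : ∀ i, (Gmod (Ztilde k) q) i j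
      = (((if (i : ℕ) = ((⟨(j:ℕ), hj⟩ : Fin k) : ℕ) then (1:ℤ) else 0) : ℤ) : ZMod q) := by
    intro i
    simp only [Gmod, Matrix.map_apply, Ztilde, Matrix.of_apply, if_pos hj]
  rw [Finset.sum_congr rfl fun i _ => by rw [he i]]
  exact sum_delta u _

lemma vecMul_Z2 (u : Fin k → ZMod q) (j : Fin (2*k+1)) (hj : k ≤ (j:ℕ)) (hj2 : (j:ℕ) < 2*k) :
    Matrix.vecMul u (Gmod (Ztilde k) q) j
      = (∑ i, u i) - u ⟨(j:ℕ) - k, by omega⟩ := by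
  show ∑ i, u i * (Gmod (Ztilde k) q) i j = _
  have he : ∀ i, (Gmod (Ztilde k) q) i j
      = (((if (i : ℕ) = ((⟨(j:ℕ) - k, by omega⟩ : Fin k) : ℕ) then (0:ℤ) else 1) : ℤ) : ZMod q) := by
    intro i
    simp only [Gmod, Matrix.map_apply, Ztilde, Matrix.of_apply, if_neg (by omega : ¬ (j:ℕ) < k),
      if_pos hj2]
  rw [Finset.sum_congr rfl fun i _ => by rw [he i]]
  exact sum_codelta u _

lemma vecMul_Z3 (u : Fin k → ZMod q) (j : Fin (2*k+1)) (hj2 : ¬ (j:ℕ) < 2*k) :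
    Matrix.vecMul u (Gmod (Ztilde k) q) j = ∑ i, u i := by
  show ∑ i, u i * (Gmod (Ztilde k) q) i j = _
  have he : ∀ i, (Gmod (Ztilde k) q) i j = ((1 : ℤ) : ZMod q) := by
    intro i
    simp only [Gmod, Matrix.map_apply, Ztilde, Matrix.of_apply, if_neg (by omega : ¬ (j:ℕ) < k),
      if_neg hj2]
  rw [Finset.sum_congr rfl fun i _ => by rw [he i]]
  simp

lemma vecMul_N1 (u : Fin k → ZMod q) (j : Fin (2*k)) (hj : (j:ℕ) < k) :
    Matrix.vecMul u (Gmod (Ntilde k) q) j = u ⟨(j:ℕ), hj⟩ := by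
  show ∑ i, u i * (Gmod (Ntilde k) q) i j = _
  have he : ∀ i, (Gmod (Ntilde k) q) i j
      = (((if (i : ℕ) = ((⟨(j:ℕ), hj⟩ : Fin k) : ℕ) then (1:ℤ) else 0) : ℤ) : ZMod q) := by
    intro i
    simp only [Gmod, Matrix.map_apply, Ntilde, Matrix.of_apply, if_pos hj]
  rw [Finset.sum_congr rfl fun i _ => by rw [he i]]
  exact sum_delta u _

lemma vecMul_N2 (u : Fin k → ZMod q) (j : Fin (2*k)) (hj : ¬ (j:ℕ) < k) :
    Matrix.vecMul u (Gmod (Ntilde k) q) j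
      = (∑ i, u i) - u ⟨(j:ℕ) - k, by omega⟩ := by
  show ∑ i, u i * (Gmod (Ntilde k) q) i j = _
  have he : ∀ i, (Gmod (Ntilde k) q) i j
      = (((if (i : ℕ) = ((⟨(j:ℕ) - k, by omega⟩ : Fin k) : ℕ) then (0:ℤ) else 1) : ℤ) : ZMod q) := by
    intro i
    simp only [Gmod, Matrix.map_apply, Ntilde, Matrix.of_apply, if_neg hj]
  rw [Finset.sum_congr rfl fun i _ => by rw [he i]]
  exact sum_codelta u _

lemma Z_iff (u : Fin k → ZMod q) :
    (∀ j, Matrix.vecMul u (Gmod (Ztilde k) q) j ≠ 0)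
      ↔ ((∀ i, u i ≠ 0 ∧ u i ≠ ∑ i, u i) ∧ (∑ i, u i) ≠ 0) := by
  constructor
  · intro H
    refine ⟨fun i => ⟨?_, ?_⟩, ?_⟩
    · have := H ⟨(i:ℕ), by omega⟩
      rwa [vecMul_Z1 u _ (by simpa using i.isLt)] at this
    · have hlt : (i:ℕ) + k < 2*k := by have := i.isLt; omega
      have := H ⟨(i:ℕ) + k, by omega⟩
      rw [vecMul_Z2 u _ (by simp) (by simpa using hlt)] at this
      have h2 : (⟨(i:ℕ) + k - k, by omega⟩ : Fin k) = i := by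
        apply Fin.ext; simp
      rw [h2] at this
      exact fun hc => this (by rw [hc]; ring)
    · have := H ⟨2*k, by omega⟩
      rwa [vecMul_Z3 u _ (by simp)] at this
  · rintro ⟨h1, h2⟩ j
    rcases lt_or_ge ((j:ℕ)) k with hj | hj
    · rw [vecMul_Z1 u j hj]; exact (h1 _).1
    · rcases lt_or_ge ((j:ℕ)) (2*k) with hj2 | hj2
      · rw [vecMul_Z2 u j hj hj2]
        exact sub_ne_zero.mpr (Ne.symm (h1 _).2)
      · rw [vecMul_Z3 u j (by omega)]; exact h2

lemma N_iff (u : Fin k → ZMod q) :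
    (∀ j, Matrix.vecMul u (Gmod (Ntilde k) q) j ≠ 0)
      ↔ (∀ i, u i ≠ 0 ∧ u i ≠ ∑ i, u i) := by
  constructor
  · intro H i
    refine ⟨?_, ?_⟩
    · have := H ⟨(i:ℕ), by omega⟩
      rwa [vecMul_N1 u _ (by simpa using i.isLt)] at this
    · have := H ⟨(i:ℕ) + k, by omega⟩
      rw [vecMul_N2 u _ (by simp)] at this
      have h2 : (⟨(i:ℕ) + k - k, by omega⟩ : Fin k) = i := by
        apply Fin.ext; simp
      rw [h2] at this
      exact fun hc => this (by rw [hc]; ring)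
  · rintro h1 j
    rcases lt_or_ge ((j:ℕ)) k with hj | hj
    · rw [vecMul_N1 u j hj]; exact (h1 _).1
    · rw [vecMul_N2 u j (by omega)]
      exact sub_ne_zero.mpr (Ne.symm (h1 _).2)


end

theorem stmt18 (k q : ℕ) (hk : 2 ≤ k) (hq : 1 ≤ q) :
    (q : ℤ) * chiQuasi (Ztilde k) q =
        ((q : ℤ) - 1) * ((q : ℤ) - 2) ^ k - (-2 : ℤ) ^ k * (2 * (q : ℤ) - 1) +
          (-1 : ℤ) ^ k * (q : ℤ) *
            ∑ j ∈ Finset.range (k + 1),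
              (Nat.choose k j : ℤ) * (Int.gcd ((j : ℤ) - 1) (q : ℤ) : ℤ) ∧
    (q : ℤ) * chiQuasi (Ntilde k) q =
        ((q : ℤ) - 1) ^ k + (-1 : ℤ) ^ k * ((q : ℤ) - 1) +
          (q : ℤ) * chiQuasi (Ztilde k) q := by
  haveI : NeZero q := ⟨by omega⟩
  -- Z part
  have hZcard : (chiQuasi (Ztilde k) q : ℤ) = ((Finset.univ.filter (fun u : Fin k → ZMod q =>
        (∀ i, u i ≠ 0 ∧ u i ≠ ∑ i, u i) ∧ (∑ i, u i) ≠ 0)).card : ℤ) := by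
    have hset : {u : Fin k → ZMod q | ∀ j, Matrix.vecMul u (Gmod (Ztilde k) q) j ≠ 0}
        = ↑(Finset.univ.filter (fun u : Fin k → ZMod q =>
          (∀ i, u i ≠ 0 ∧ u i ≠ ∑ i, u i) ∧ (∑ i, u i) ≠ 0)) := by
      ext u
      simp only [Set.mem_setOf_eq, Finset.coe_filter, Finset.mem_univ, true_and]
      exact Z_iff u
    unfold chiQuasi
    rw [hset, Set.ncard_coe_finset]
  have hNcard : (chiQuasi (Ntilde k) q : ℤ) = ((Finset.univ.filter (fun u : Fin k → ZMod q =>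
        (∀ i, u i ≠ 0 ∧ u i ≠ ∑ i, u i))).card : ℤ) := by
    have hset : {u : Fin k → ZMod q | ∀ j, Matrix.vecMul u (Gmod (Ntilde k) q) j ≠ 0}
        = ↑(Finset.univ.filter (fun u : Fin k → ZMod q =>
          (∀ i, u i ≠ 0 ∧ u i ≠ ∑ i, u i))) := by
      ext u
      simp only [Set.mem_setOf_eq, Finset.coe_filter, Finset.mem_univ, true_and]
      exact N_iff u
    unfold chiQuasi
    rw [hset, Set.ncard_coe_finset]
  have hfibs : ∀ s ∈ Finset.univ.filter (· ≠ (0:ZMod q)),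
      (Finset.univ.filter (fun u : Fin k → ZMod q =>
        (∀ i, u i ≠ 0 ∧ u i ≠ ∑ i, u i) ∧ (∑ i, u i) ≠ 0)).filter (fun u => ∑ i, u i = s)
      = ArrCodeAux.eSet ({0, s} : Finset (ZMod q)) k s := by
    intro s hs
    have hs' : s ≠ 0 := by simpa using hs
    ext u
    simp only [ArrCodeAux.eSet, Finset.mem_filter, Finset.mem_univ, true_and,
      Finset.mem_insert, Finset.mem_singleton, not_or]
    constructor
    · rintro ⟨⟨h1, _⟩, h3⟩
      exact ⟨fun i => ⟨(h1 i).1, by rw [← h3]; exact (h1 i).2⟩, h3⟩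
    · rintro ⟨h1, h3⟩
      exact ⟨⟨fun i => ⟨(h1 i).1, by rw [h3]; exact (h1 i).2⟩, by rw [h3]; exact hs'⟩, h3⟩
  have hfibZ : (Finset.univ.filter (fun u : Fin k → ZMod q =>
        (∀ i, u i ≠ 0 ∧ u i ≠ ∑ i, u i) ∧ (∑ i, u i) ≠ 0)).card
      = ∑ s ∈ Finset.univ.filter (· ≠ (0:ZMod q)), (ArrCodeAux.eSet ({0, s} : Finset (ZMod q)) k s).card := by
    rw [Finset.card_eq_sum_card_fiberwise (f := fun u => ∑ i, u i)
      (t := Finset.univ.filter (· ≠ (0:ZMod q))) (fun u hu => by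
        simp only [Finset.mem_coe, Finset.mem_filter, Finset.mem_univ, true_and] at hu ⊢
        exact hu.2)]
    exact Finset.sum_congr rfl (fun s hs => by rw [hfibs s hs])
  have hq2 : ∀ s ∈ Finset.univ.filter (· ≠ (0:ZMod q)),
      (q:ℤ) * ((ArrCodeAux.eSet ({0, s} : Finset (ZMod q)) k s).card : ℤ)
      = ((q:ℤ)-2)^k - (-2)^k + (-1)^k * (q:ℤ) * ArrCodeAux.Ssum s k s := by
    intro s hs
    exact ArrCodeAux.d_formula (by simpa using hs) k s
  have main1 : (q:ℤ) * ((Finset.univ.filter (fun u : Fin k → ZMod q =>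
        (∀ i, u i ≠ 0 ∧ u i ≠ ∑ i, u i) ∧ (∑ i, u i) ≠ 0)).card : ℤ)
      = (∑ _s ∈ Finset.univ.filter (· ≠ (0:ZMod q)), (((q:ℤ)-2)^k - (-2)^k))
        + (-1)^k * (q:ℤ) * ∑ s ∈ Finset.univ.filter (· ≠ (0:ZMod q)), ArrCodeAux.Ssum s k s := by
    rw [hfibZ]
    push_cast
    rw [Finset.mul_sum, Finset.sum_congr rfl hq2, Finset.sum_add_distrib, Finset.mul_sum]
  have hswap : ∑ s ∈ Finset.univ.filter (· ≠ (0:ZMod q)), ArrCodeAux.Ssum s k s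
      = ∑ j ∈ Finset.range (k+1), (Nat.choose k j : ℤ) * ((Int.gcd ((j:ℤ)-1) (q:ℤ) : ℤ) - 1) := by
    unfold ArrCodeAux.Ssum
    rw [Finset.sum_comm]
    refine Finset.sum_congr rfl fun j _ => ?_
    rw [← Finset.mul_sum, ArrCodeAux.sum_ind]
  have hscard : (∑ _s ∈ Finset.univ.filter (· ≠ (0:ZMod q)), (((q:ℤ)-2)^k - (-2)^k))
      = ((q:ℤ)-1) * (((q:ℤ)-2)^k - (-2)^k) := by
    rw [Finset.sum_const, nsmul_eq_mul, ArrCodeAux.card_E]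
  have hchoose : (∑ j ∈ Finset.range (k+1), (Nat.choose k j : ℤ)) = 2^k := by
    have := Nat.sum_range_choose k
    exact_mod_cast congrArg (Nat.cast : ℕ → ℤ) this
  have h2k : (-2:ℤ)^k = (-1)^k * 2^k := by rw [← neg_one_mul, mul_pow]
  have hx : ∑ j ∈ Finset.range (k+1), (Nat.choose k j : ℤ) * ((Int.gcd ((j:ℤ)-1) (q:ℤ) : ℤ) - 1)
      = (∑ j ∈ Finset.range (k+1), (Nat.choose k j : ℤ) * (Int.gcd ((j:ℤ)-1) (q:ℤ) : ℤ)) - 2^k := by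
    rw [← hchoose, ← Finset.sum_sub_distrib]
    exact Finset.sum_congr rfl fun j _ => by ring
  have partZ : (q : ℤ) * chiQuasi (Ztilde k) q =
      ((q : ℤ) - 1) * ((q : ℤ) - 2) ^ k - (-2 : ℤ) ^ k * (2 * (q : ℤ) - 1) +
        (-1 : ℤ) ^ k * (q : ℤ) *
          ∑ j ∈ Finset.range (k + 1),
            (Nat.choose k j : ℤ) * (Int.gcd ((j : ℤ) - 1) (q : ℤ) : ℤ) := by
    rw [hZcard, main1, hswap, hscard, hx]
    linear_combination (q:ℤ) * h2k
  refine ⟨partZ, ?_⟩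
  -- N part
  have hfib0 : (Finset.univ.filter (fun u : Fin k → ZMod q =>
        (∀ i, u i ≠ 0 ∧ u i ≠ ∑ i, u i))).filter (fun u => ∑ i, u i = 0)
      = ArrCodeAux.eSet ({0} : Finset (ZMod q)) k 0 := by
    ext u
    simp only [ArrCodeAux.eSet, Finset.mem_filter, Finset.mem_univ, true_and,
      Finset.mem_singleton]
    constructor
    · rintro ⟨h1, h3⟩
      exact ⟨fun i => (h1 i).1, h3⟩
    · rintro ⟨h1, h3⟩
      exact ⟨fun i => ⟨h1 i, by rw [h3]; exact h1 i⟩, h3⟩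
  have hfibsN : ∀ s ∈ Finset.univ.filter (· ≠ (0:ZMod q)),
      (Finset.univ.filter (fun u : Fin k → ZMod q =>
        (∀ i, u i ≠ 0 ∧ u i ≠ ∑ i, u i))).filter (fun u => ∑ i, u i = s)
      = ArrCodeAux.eSet ({0, s} : Finset (ZMod q)) k s := by
    intro s hs
    have hs' : s ≠ 0 := by simpa using hs
    ext u
    simp only [ArrCodeAux.eSet, Finset.mem_filter, Finset.mem_univ, true_and,
      Finset.mem_insert, Finset.mem_singleton, not_or]
    constructor
    · rintro ⟨h1, h3⟩
      exact ⟨fun i => ⟨(h1 i).1, by rw [← h3]; exact (h1 i).2⟩, h3⟩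
    · rintro ⟨h1, h3⟩
      exact ⟨fun i => ⟨(h1 i).1, by rw [h3]; exact (h1 i).2⟩, h3⟩
  have hNsum : ((Finset.univ.filter (fun u : Fin k → ZMod q =>
        (∀ i, u i ≠ 0 ∧ u i ≠ ∑ i, u i))).card : ℤ)
      = ((ArrCodeAux.eSet ({0} : Finset (ZMod q)) k 0).card : ℤ)
        + ((Finset.univ.filter (fun u : Fin k → ZMod q =>
        (∀ i, u i ≠ 0 ∧ u i ≠ ∑ i, u i) ∧ (∑ i, u i) ≠ 0)).card : ℤ) := by
    have h2 : (Finset.univ.filter (fun u : Fin k → ZMod q =>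
          (∀ i, u i ≠ 0 ∧ u i ≠ ∑ i, u i))).card
        = ∑ s, ((Finset.univ.filter (fun u : Fin k → ZMod q =>
          (∀ i, u i ≠ 0 ∧ u i ≠ ∑ i, u i))).filter (fun u => ∑ i, u i = s)).card :=
      Finset.card_eq_sum_card_fiberwise (fun u _ => Finset.mem_univ _)
    have h1 : ∑ s ∈ Finset.univ.erase (0:ZMod q),
          ((Finset.univ.filter (fun u : Fin k → ZMod q =>
            (∀ i, u i ≠ 0 ∧ u i ≠ ∑ i, u i))).filter (fun u => ∑ i, u i = s)).card
        + ((Finset.univ.filter (fun u : Fin k → ZMod q =>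
            (∀ i, u i ≠ 0 ∧ u i ≠ ∑ i, u i))).filter (fun u => ∑ i, u i = 0)).card
        = ∑ s, ((Finset.univ.filter (fun u : Fin k → ZMod q =>
            (∀ i, u i ≠ 0 ∧ u i ≠ ∑ i, u i))).filter (fun u => ∑ i, u i = s)).card :=
      Finset.sum_erase_add _ _ (Finset.mem_univ (0:ZMod q))
    have h3 : Finset.univ.erase (0 : ZMod q) = Finset.univ.filter (· ≠ (0:ZMod q)) :=
      (Finset.filter_ne' _ _).symm
    have h4 : ∑ s ∈ Finset.univ.erase (0:ZMod q),
        ((Finset.univ.filter (fun u : Fin k → ZMod q =>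
          (∀ i, u i ≠ 0 ∧ u i ≠ ∑ i, u i))).filter (fun u => ∑ i, u i = s)).card
        = ∑ s ∈ Finset.univ.filter (· ≠ (0:ZMod q)),
          (ArrCodeAux.eSet ({0, s} : Finset (ZMod q)) k s).card := by
      rw [h3]
      exact Finset.sum_congr rfl (fun s hs => by rw [hfibsN s hs])
    rw [h2, ← h1, h4, hfib0, ← hfibZ]
    push_cast
    ring
  have hc := ArrCodeAux.c_formula (q := q) k (0 : ZMod q)
  rw [if_pos rfl, mul_one] at hc
  rw [hNcard, hNsum, hZcard]
  linear_combination hc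

end ArrCode
end
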